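/- arXiv:1907.09464 — 6 statements merged into one kernel-verified Lean document; each statement's English description precedes it below -/
import Mathlib

section
/- Let α, β : ℝ → ℂ be four-times continuously differentiable functions with |α(x)|² + |β(x)|² = 1 and |α^{(k)}(x)|, |β^{(k)}(x)| ≤ 2^{−10k} for all x ∈ ℝ and 1 ≤ k ≤ 4. Define H(x) = e^{ix} α(x) + e^{2ix} β(x). Then for every x ∈ ℝ there exists k ∈ {0,1,2,3} such that |Re(H^{(k)}(x))| ≥ 1/4. -/
open Complex

noncomputable def Gg (c : ℂ) (γ : ℝ → ℂ) (j : ℕ) : ℝ → ℂ :=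
  fun x => Complex.exp (c * x) * iteratedDeriv j γ x

lemma Gg_hasDerivAt (c : ℂ) {γ : ℝ → ℂ} (hγ : ContDiff ℝ 4 γ) {j : ℕ} (hj : j < 4) (x : ℝ) :
    HasDerivAt (Gg c γ j) (c * Gg c γ j x + Gg c γ (j+1) x) x := by
  have h1 : HasDerivAt (fun x : ℝ => Complex.exp (c * x)) (Complex.exp (c * x) * c) x := by
    have h0 : HasDerivAt (fun x : ℝ => c * (x : ℂ)) c x := by
      simpa using (Complex.ofRealCLM.hasDerivAt (x := x)).const_mul c
    exact h0.cexp
  have hd : Differentiable ℝ (iteratedDeriv j γ) :=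
    hγ.differentiable_iteratedDeriv j (by exact_mod_cast hj)
  have h2 : HasDerivAt (iteratedDeriv j γ) (iteratedDeriv (j+1) γ x) x := by
    rw [iteratedDeriv_succ]
    exact (hd x).hasDerivAt
  have : HasDerivAt (Gg c γ j) _ x := h1.mul h2
  simp only [Gg]
  convert this using 1
  ring

noncomputable def D1f (α β : ℝ → ℂ) : ℝ → ℂ := fun x =>
  (I * Gg I α 0 x + Gg I α 1 x) + ((2*I) * Gg (2*I) β 0 x + Gg (2*I) β 1 x)

noncomputable def D2f (α β : ℝ → ℂ) : ℝ → ℂ := fun x =>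
  (I * (I * Gg I α 0 x + Gg I α 1 x) + (I * Gg I α 1 x + Gg I α 2 x)) +
  ((2*I) * ((2*I) * Gg (2*I) β 0 x + Gg (2*I) β 1 x) +
    ((2*I) * Gg (2*I) β 1 x + Gg (2*I) β 2 x))

noncomputable def D3f (α β : ℝ → ℂ) : ℝ → ℂ := fun x =>
  ((I * (I * (I * Gg I α 0 x + Gg I α 1 x) + (I * Gg I α 1 x + Gg I α 2 x)) +
    (I * (I * Gg I α 1 x + Gg I α 2 x) + (I * Gg I α 2 x + Gg I α 3 x)))) +
  ((2*I) * ((2*I) * ((2*I) * Gg (2*I) β 0 x + Gg (2*I) β 1 x) +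
      ((2*I) * Gg (2*I) β 1 x + Gg (2*I) β 2 x)) +
    ((2*I) * ((2*I) * Gg (2*I) β 1 x + Gg (2*I) β 2 x) +
      ((2*I) * Gg (2*I) β 2 x + Gg (2*I) β 3 x)))

lemma hd1 {α β : ℝ → ℂ} (hα : ContDiff ℝ 4 α) (hβ : ContDiff ℝ 4 β) (x : ℝ) :
    HasDerivAt (fun y => Gg I α 0 y + Gg (2*I) β 0 y) (D1f α β x) x :=
  (Gg_hasDerivAt I hα (by norm_num) x).add (Gg_hasDerivAt (2*I) hβ (by norm_num) x)

lemma hd2 {α β : ℝ → ℂ} (hα : ContDiff ℝ 4 α) (hβ : ContDiff ℝ 4 β) (x : ℝ) :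
    HasDerivAt (D1f α β) (D2f α β x) x :=
  (((Gg_hasDerivAt I hα (by norm_num) x).const_mul I).add
    (Gg_hasDerivAt I hα (by norm_num) x)).add
  ((((Gg_hasDerivAt (2*I) hβ (by norm_num) x).const_mul (2*I)).add
    (Gg_hasDerivAt (2*I) hβ (by norm_num) x)))

lemma hd3 {α β : ℝ → ℂ} (hα : ContDiff ℝ 4 α) (hβ : ContDiff ℝ 4 β) (x : ℝ) :
    HasDerivAt (D2f α β) (D3f α β x) x :=
  (((((Gg_hasDerivAt I hα (by norm_num) x).const_mul I).add
      (Gg_hasDerivAt I hα (by norm_num) x)).const_mul I).add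
    (((Gg_hasDerivAt I hα (by norm_num) x).const_mul I).add
      (Gg_hasDerivAt I hα (by norm_num) x))).add
  (((((Gg_hasDerivAt (2*I) hβ (by norm_num) x).const_mul (2*I)).add
      (Gg_hasDerivAt (2*I) hβ (by norm_num) x)).const_mul (2*I)).add
    ((((Gg_hasDerivAt (2*I) hβ (by norm_num) x).const_mul (2*I)).add
      (Gg_hasDerivAt (2*I) hβ (by norm_num) x))))

set_option maxHeartbeats 1000000 in
theorem H_some_deriv_large (α β : ℝ → ℂ) (H : ℝ → ℂ)
    (hα : ContDiff ℝ 4 α) (hβ : ContDiff ℝ 4 β)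
    (hnorm : ∀ x : ℝ, ‖α x‖ ^ 2 + ‖β x‖ ^ 2 = 1)
    (hαd : ∀ x : ℝ, ∀ k, 1 ≤ k → k ≤ 4 →
      ‖iteratedDeriv k α x‖ ≤ Real.rpow 2 (-(10 * k : ℕ) : ℝ))
    (hβd : ∀ x : ℝ, ∀ k, 1 ≤ k → k ≤ 4 →
      ‖iteratedDeriv k β x‖ ≤ Real.rpow 2 (-(10 * k : ℕ) : ℝ))
    (hH : H = fun x : ℝ => Complex.exp (Complex.I * x) * α x
      + Complex.exp (2 * Complex.I * x) * β x) :
    ∀ x : ℝ, ∃ k ≤ 3, |(iteratedDeriv k H x).re| ≥ 1 / 4 := by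
  intro x
  by_contra hcon
  push_neg at hcon
  -- function-level derivative identities
  have hH0 : H = fun y => Gg I α 0 y + Gg (2*I) β 0 y := by
    funext y
    simp [hH, Gg, mul_comm, two_mul, mul_assoc]
  have e1 : deriv H = D1f α β := by
    rw [hH0]; exact funext fun y => (hd1 hα hβ y).deriv
  have e2 : deriv (D1f α β) = D2f α β := funext fun y => (hd2 hα hβ y).deriv
  have e3 : deriv (D2f α β) = D3f α β := funext fun y => (hd3 hα hβ y).deriv
  have k0 : iteratedDeriv 0 H x = Gg I α 0 x + Gg (2*I) β 0 x := by
    rw [iteratedDeriv_zero, hH0]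
  have k1 : iteratedDeriv 1 H x = D1f α β x := by rw [iteratedDeriv_one, e1]
  have k2 : iteratedDeriv 2 H x = D2f α β x := by
    rw [show (2:ℕ) = 1+1 from rfl, iteratedDeriv_succ, iteratedDeriv_one, e1, e2]
  have k3 : iteratedDeriv 3 H x = D3f α β x := by
    rw [show (3:ℕ) = 2+1 from rfl, iteratedDeriv_succ,
      show (2:ℕ) = 1+1 from rfl, iteratedDeriv_succ, iteratedDeriv_one, e1, e2, e3]
  have h0 := hcon 0 (by norm_num); rw [k0] at h0
  have h1 := hcon 1 (by norm_num); rw [k1] at h1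
  have h2 := hcon 2 (by norm_num); rw [k2] at h2
  have h3 := hcon 3 (by norm_num); rw [k3] at h3
  -- bounds on components
  have hrp : ∀ k : ℕ, Real.rpow 2 (-(10 * k : ℕ) : ℝ) = ((2:ℝ)^(10*k))⁻¹ := fun k => by
    rw [show Real.rpow 2 (-(10 * k : ℕ) : ℝ) = (2:ℝ) ^ (-(10 * k : ℕ) : ℝ) from rfl,
      Real.rpow_neg (by norm_num), Real.rpow_natCast]
  have key : ∀ (c : ℂ), ‖Complex.exp (c * x)‖ = 1 → ∀ (γ : ℝ → ℂ),
      (∀ k, 1 ≤ k → k ≤ 4 →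
        ‖iteratedDeriv k γ x‖ ≤ Real.rpow 2 (-(10 * k : ℕ) : ℝ)) →
      ∀ j, 1 ≤ j → j ≤ 4 →
      |(Gg c γ j x).re| ≤ ((2:ℝ)^(10*j))⁻¹ ∧ |(Gg c γ j x).im| ≤ ((2:ℝ)^(10*j))⁻¹ := by
    intro c hc γ hγ j hj1 hj4
    have habs : ‖Gg c γ j x‖ ≤ ((2:ℝ)^(10*j))⁻¹ := by
      have : ‖Gg c γ j x‖ = ‖iteratedDeriv j γ x‖ := by
        simp only [Gg, norm_mul, hc, one_mul]
      rw [this, ← hrp j]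
      exact hγ j hj1 hj4
    exact ⟨(Complex.abs_re_le_norm _).trans habs, (Complex.abs_im_le_norm _).trans habs⟩
  have hcI : ‖Complex.exp (I * x)‖ = 1 := by
    simp [Complex.norm_exp]
  have hc2I : ‖Complex.exp (2 * I * x)‖ = 1 := by
    simp [Complex.norm_exp]
  obtain ⟨A1r, A1i⟩ := key I hcI α (hαd x) 1 (by norm_num) (by norm_num)
  obtain ⟨A2r, A2i⟩ := key I hcI α (hαd x) 2 (by norm_num) (by norm_num)
  obtain ⟨A3r, A3i⟩ := key I hcI α (hαd x) 3 (by norm_num) (by norm_num)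
  obtain ⟨B1r, B1i⟩ := key (2*I) hc2I β (hβd x) 1 (by norm_num) (by norm_num)
  obtain ⟨B2r, B2i⟩ := key (2*I) hc2I β (hβd x) 2 (by norm_num) (by norm_num)
  obtain ⟨B3r, B3i⟩ := key (2*I) hc2I β (hβd x) 3 (by norm_num) (by norm_num)
  norm_num at A1r A1i A2r A2i A3r A3i B1r B1i B2r B2i B3r B3i
  -- norm equation
  have hn : (Gg I α 0 x).re^2 + (Gg I α 0 x).im^2 +
      ((Gg (2*I) β 0 x).re^2 + (Gg (2*I) β 0 x).im^2) = 1 := by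
    have ga : ‖Gg I α 0 x‖ = ‖α x‖ := by
      simp only [Gg, iteratedDeriv_zero, norm_mul, hcI, one_mul]
    have gb : ‖Gg (2*I) β 0 x‖ = ‖β x‖ := by
      simp only [Gg, iteratedDeriv_zero, norm_mul, hc2I, one_mul]
    have h := hnorm x
    rw [← ga, ← gb, Complex.sq_norm, Complex.sq_norm, Complex.normSq_apply,
      Complex.normSq_apply] at h
    linear_combination h
  -- real parts
  have r0 : (Gg I α 0 x + Gg (2*I) β 0 x).re
      = (Gg I α 0 x).re + (Gg (2*I) β 0 x).re := by simp
  have r1 : (D1f α β x).re = -(Gg I α 0 x).im + (Gg I α 1 x).re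
      - 2*(Gg (2*I) β 0 x).im + (Gg (2*I) β 1 x).re := by
    simp [D1f, Complex.add_re, Complex.add_im, Complex.mul_re, Complex.mul_im]
    ring
  have r2 : (D2f α β x).re = -(Gg I α 0 x).re - 2*(Gg I α 1 x).im + (Gg I α 2 x).re
      - 4*(Gg (2*I) β 0 x).re - 4*(Gg (2*I) β 1 x).im + (Gg (2*I) β 2 x).re := by
    simp [D2f, Complex.add_re, Complex.add_im, Complex.mul_re, Complex.mul_im]
    ring
  have r3 : (D3f α β x).re = (Gg I α 0 x).im - 3*(Gg I α 1 x).re - 3*(Gg I α 2 x).im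
      + (Gg I α 3 x).re + 8*(Gg (2*I) β 0 x).im - 12*(Gg (2*I) β 1 x).re
      - 6*(Gg (2*I) β 2 x).im + (Gg (2*I) β 3 x).re := by
    simp [D3f, Complex.add_re, Complex.add_im, Complex.mul_re, Complex.mul_im]
    ring
  rw [r0] at h0; rw [r1] at h1; rw [r2] at h2; rw [r3] at h3
  set p := (Gg I α 0 x).re
  set q := (Gg I α 0 x).im
  set r := (Gg (2*I) β 0 x).re
  set s := (Gg (2*I) β 0 x).im
  obtain ⟨l0, u0⟩ := abs_lt.mp h0
  obtain ⟨l1, u1⟩ := abs_lt.mp h1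
  obtain ⟨l2, u2⟩ := abs_lt.mp h2
  obtain ⟨l3, u3⟩ := abs_lt.mp h3
  obtain ⟨a1r, a1r'⟩ := abs_le.mp A1r
  obtain ⟨a1i, a1i'⟩ := abs_le.mp A1i
  obtain ⟨a2r, a2r'⟩ := abs_le.mp A2r
  obtain ⟨a2i, a2i'⟩ := abs_le.mp A2i
  obtain ⟨a3r, a3r'⟩ := abs_le.mp A3r
  obtain ⟨b1r, b1r'⟩ := abs_le.mp B1r
  obtain ⟨b1i, b1i'⟩ := abs_le.mp B1i
  obtain ⟨b2r, b2r'⟩ := abs_le.mp B2r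
  obtain ⟨b2i, b2i'⟩ := abs_le.mp B2i
  obtain ⟨b3r, b3r'⟩ := abs_le.mp B3r
  have hp : -(0.43:ℝ) < p ∧ p < 0.43 := by
    constructor <;>
      linarith (config := { oracle := .fourierMotzkin }) only [l0, u0, l2, u2, a1i, a1i', a2r, a2r', b1i, b1i', b2r, b2r']
  have hq : -(0.44:ℝ) < q ∧ q < 0.44 := by
    constructor <;>
      linarith (config := { oracle := .fourierMotzkin }) only [l1, u1, l3, u3, a1r, a1r', a2i, a2i', a3r, a3r',
        b1r, b1r', b2i, b2i', b3r, b3r']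
  have hr : -(0.2:ℝ) < r ∧ r < 0.2 := by
    constructor <;>
      linarith (config := { oracle := .fourierMotzkin }) only [l0, u0, l2, u2, a1i, a1i', a2r, a2r', b1i, b1i', b2r, b2r']
  have hs : -(0.1:ℝ) < s ∧ s < 0.1 := by
    constructor <;>
      linarith (config := { oracle := .fourierMotzkin }) only [l1, u1, l3, u3, a1r, a1r', a2i, a2i', a3r, a3r',
        b1r, b1r', b2i, b2i', b3r, b3r']
  have sqb : ∀ t c : ℝ, -c < t → t < c → t^2 < c^2 := by
    intro t c h1 h2
    have h3 : |t| < c := abs_lt.mpr ⟨h1, h2⟩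
    calc t^2 = |t|^2 := (_root_.sq_abs t).symm
    _ < c^2 := by
      apply pow_lt_pow_left₀ h3 (abs_nonneg t)
      norm_num
  have sp : p^2 < 0.43^2 := sqb p _ hp.1 hp.2
  have sq : q^2 < 0.44^2 := sqb q _ hq.1 hq.2
  have sr : r^2 < 0.2^2 := sqb r _ hr.1 hr.2
  have ss : s^2 < 0.1^2 := sqb s _ hs.1 hs.2
  linarith (config := { oracle := .fourierMotzkin }) only [hn, sp, sq, sr, ss]
end

section
/- Let f : I → ℝ be (k+1)-times continuously differentiable on an interval I, and let y_0 < y_1 < ⋯ < y_k be points of I. Then for all x ∈ I, |f^{(k)}(x) − Σ_{i=0}^{k} k!·f(y_i) / ∏_{j≠i}(y_i − y_j)| ≤ sup_{x∈I} |x − (1/(k+1)) Σ_{i=0}^{k} y_i| · sup_{x∈I} |f^{(k+1)}(x)|. -/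
open Polynomial Finset Set

noncomputable def dd (f : ℝ → ℝ) (s : Finset ℝ) : ℝ :=
  ∑ z ∈ s, f z / ∏ w ∈ s.erase z, (z - w)

lemma coeff_interpolate (f : ℝ → ℝ) (s : Finset ℝ) (n : ℕ) (hs : s.card = n + 1) :
    (Lagrange.interpolate s id f).coeff n = dd f s := by
  rw [Lagrange.interpolate_apply, Polynomial.finset_sum_coeff, dd]
  refine Finset.sum_congr rfl fun i hi => ?_
  have hbasis : Lagrange.basis s id i
      = C (∏ j ∈ s.erase i, (i - j)⁻¹) * ∏ j ∈ s.erase i, (X - C j) := by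
    rw [Lagrange.basis]
    simp only [Lagrange.basisDivisor, id_eq]
    rw [Finset.prod_mul_distrib, map_prod]
  have hcard : (s.erase i).card = n := by
    rw [Finset.card_erase_of_mem hi, hs]; omega
  have hmonic : (∏ j ∈ s.erase i, (X - C j)).Monic :=
    monic_prod_of_monic _ _ fun j _ => monic_X_sub_C j
  have hdeg : (∏ j ∈ s.erase i, (X - C j)).natDegree = n := by
    rw [natDegree_prod_of_monic _ _ fun j _ => monic_X_sub_C j]
    simp [hcard]
  have hcoeff : (∏ j ∈ s.erase i, (X - C j)).coeff n = 1 := by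
    rw [← hdeg]; exact hmonic.coeff_natDegree
  rw [hbasis, coeff_C_mul, coeff_C_mul, hcoeff, mul_one, Finset.prod_inv_distrib,
    div_eq_mul_inv]
lemma dd_rec (f : ℝ → ℝ) {u v : ℝ} {s : Finset ℝ} (huv : u ≠ v)
    (hu : u ∉ s) (hv : v ∉ s) :
    dd f (insert u s) - dd f (insert v s) = (u - v) * dd f (insert u (insert v s)) := by
  classical
  set m := s.card with hm
  have hcu : (insert u s).card = m + 1 := card_insert_of_notMem hu
  have hcv : (insert v s).card = m + 1 := card_insert_of_notMem hv
  have huvs : u ∉ insert v s := by simp [huv, hu]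
  have hcuv : (insert u (insert v s)).card = m + 2 := by
    rw [card_insert_of_notMem huvs, hcv]
  set P₁ := Lagrange.interpolate (insert u s) id f with hP₁
  set P₂ := Lagrange.interpolate (insert v s) id f with hP₂
  set Q := Lagrange.interpolate (insert u (insert v s)) id f with hQ
  have hinj : ∀ t : Finset ℝ, Set.InjOn (id : ℝ → ℝ) t := fun t => Function.injective_id.injOn
  have hdeg1 : P₁.degree ≤ (m : WithBot ℕ) := by
    have := Lagrange.degree_interpolate_le f (hinj (insert u s))
    rwa [hcu, Nat.add_sub_cancel] at this
  have hdeg2 : P₂.degree ≤ (m : WithBot ℕ) := by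
    have := Lagrange.degree_interpolate_le f (hinj (insert v s))
    rwa [hcv, Nat.add_sub_cancel] at this
  have key : (X - C v) * P₁ - (X - C u) * P₂ = (u - v) • Q := by
    have hsmul : (u - v) • Q
        = Lagrange.interpolate (insert u (insert v s)) id ((u - v) • f) :=
      (map_smul (Lagrange.interpolate (insert u (insert v s)) id) _ _).symm
    rw [hsmul]
    refine Lagrange.eq_interpolate_of_eval_eq _ (hinj _) ?_ ?_
    · rw [hcuv]
      have h1 : ((X - C v) * P₁).degree ≤ ((m + 1 : ℕ) : WithBot ℕ) := by
        refine (degree_mul_le _ _).trans ?_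
        rw [degree_X_sub_C]
        calc (1 : WithBot ℕ) + P₁.degree ≤ 1 + (m : WithBot ℕ) := by
              exact add_le_add_right hdeg1 1
          _ = ((m + 1 : ℕ) : WithBot ℕ) := by
              rw [Nat.cast_add, Nat.cast_one, add_comm]
      have h2 : ((X - C u) * P₂).degree ≤ ((m + 1 : ℕ) : WithBot ℕ) := by
        refine (degree_mul_le _ _).trans ?_
        rw [degree_X_sub_C]
        calc (1 : WithBot ℕ) + P₂.degree ≤ 1 + (m : WithBot ℕ) := by
              exact add_le_add_right hdeg2 1
          _ = ((m + 1 : ℕ) : WithBot ℕ) := by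
              rw [Nat.cast_add, Nat.cast_one, add_comm]
      refine lt_of_le_of_lt (degree_sub_le _ _) ?_
      refine lt_of_le_of_lt (max_le h1 h2) ?_
      exact_mod_cast WithBot.coe_lt_coe.mpr (by omega)
    · intro z hz
      simp only [eval_sub, eval_mul, eval_X, eval_C, id_eq, Pi.smul_apply, smul_eq_mul]
      rcases Finset.mem_insert.mp hz with rfl | hz'
      · have e1 : eval z P₁ = f z :=
          Lagrange.eval_interpolate_at_node f (hinj _) (Finset.mem_insert_self _ _)
        rw [e1, sub_self, zero_mul, sub_zero]
      rcases Finset.mem_insert.mp hz' with rfl | hz''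
      · have e2 : eval z P₂ = f z :=
          Lagrange.eval_interpolate_at_node f (hinj _) (Finset.mem_insert_self _ _)
        rw [e2, sub_self, zero_mul, zero_sub]
        ring
      · have e1 : eval z P₁ = f z :=
          Lagrange.eval_interpolate_at_node f (hinj _)
            (Finset.mem_insert_of_mem hz'')
        have e2 : eval z P₂ = f z :=
          Lagrange.eval_interpolate_at_node f (hinj _)
            (Finset.mem_insert_of_mem hz'')
        rw [e1, e2]; ring
  have hc := congrArg (fun p => Polynomial.coeff p (m + 1)) key
  simp only [coeff_sub, coeff_smul, smul_eq_mul] at hc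
  have hxmul : ∀ p : ℝ[X], ((X - C (0:ℝ)) = X) := by intro p; simp
  have cXp : ∀ (a : ℝ) (p : ℝ[X]), ((X - C a) * p).coeff (m + 1)
      = p.coeff m - a * p.coeff (m + 1) := by
    intro a p
    rw [sub_mul, coeff_sub, coeff_X_mul, coeff_C_mul]
  rw [cXp, cXp] at hc
  have hz1 : P₁.coeff (m + 1) = 0 :=
    coeff_eq_zero_of_degree_lt (lt_of_le_of_lt hdeg1 (by exact_mod_cast WithBot.coe_lt_coe.mpr (by omega)))
  have hz2 : P₂.coeff (m + 1) = 0 :=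
    coeff_eq_zero_of_degree_lt (lt_of_le_of_lt hdeg2 (by exact_mod_cast WithBot.coe_lt_coe.mpr (by omega)))
  rw [hz1, hz2, mul_zero, mul_zero, sub_zero, sub_zero] at hc
  rw [coeff_interpolate f _ m hcu, coeff_interpolate f _ m hcv] at hc
  rw [coeff_interpolate f _ (m+1) (by omega)] at hc
  exact hc
lemma poly_contDiff (p : ℝ[X]) {n : WithTop ℕ∞} : ContDiff ℝ n fun x : ℝ => p.eval x := by
  induction p using Polynomial.induction_on' with
  | add p q hp hq => simpa [Polynomial.eval_add] using hp.add hq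
  | monomial k a =>
      simpa [Polynomial.eval_monomial] using (contDiff_const (c := a)).mul (contDiff_id.pow k)

lemma iteratedDerivWithin_poly (p : ℝ[X]) {s : Set ℝ} (hs : UniqueDiffOn ℝ s) :
    ∀ (n : ℕ) (x : ℝ), x ∈ s →
      iteratedDerivWithin n (fun t => p.eval t) s x = (Polynomial.derivative^[n] p).eval x := by
  intro n
  induction n generalizing p with
  | zero => intro x _; simp
  | succ n IH =>
    intro x hx
    rw [iteratedDerivWithin_succ']
    have heq : Set.EqOn (derivWithin (fun t => p.eval t) s)
        (fun t => (Polynomial.derivative p).eval t) s := by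
      intro t ht
      have : DifferentiableAt ℝ (fun t => p.eval t) t := p.differentiableAt
      rw [this.derivWithin (hs.uniqueDiffWithinAt ht), Polynomial.deriv]
    calc iteratedDerivWithin n (derivWithin (fun t => p.eval t) s) s x
        = iteratedDerivWithin n (fun t => (Polynomial.derivative p).eval t) s x :=
          iteratedDerivWithin_congr heq hx
      _ = (Polynomial.derivative^[n] (Polynomial.derivative p)).eval x := IH _ x hx
      _ = (Polynomial.derivative^[n+1] p).eval x := by
          rw [Function.iterate_succ_apply]

lemma eval_iterate_derivative_of_natDegree_le (p : ℝ[X]) (n : ℕ) (hp : p.natDegree ≤ n)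
    (x : ℝ) : (Polynomial.derivative^[n] p).eval x = (n.factorial : ℝ) * p.coeff n := by
  have h0 : (Polynomial.derivative^[n] p).natDegree = 0 := by
    have := Polynomial.natDegree_iterate_derivative p n
    omega
  rw [Polynomial.eq_C_of_natDegree_eq_zero h0, Polynomial.eval_C,
    Polynomial.coeff_iterate_derivative]
  simp [Nat.descFactorial_self, mul_comm]
lemma iterated_rolle {I : Set ℝ} (hI : I.OrdConnected) (hU : UniqueDiffOn ℝ I) :
    ∀ (n : ℕ) (g : ℝ → ℝ), ContDiffOn ℝ n g I →
      ∀ z : Fin (n + 1) → ℝ, StrictMono z → (∀ i, z i ∈ I) → (∀ i, g (z i) = 0) →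
        ∃ ξ ∈ I ∩ Set.Icc (z 0) (z (Fin.last n)), iteratedDerivWithin n g I ξ = 0 := by
  intro n
  induction n with
  | zero =>
    intro g _ z _ hzI hz0
    exact ⟨z 0, ⟨hzI 0, le_refl _, le_refl _⟩, by simpa using hz0 0⟩
  | succ n IH =>
    intro g hg z hz hzI hz0
    -- apply Rolle on each adjacent pair
    have hIoo : ∀ i : Fin (n + 1), Set.Ioo (z i.castSucc) (z i.succ) ⊆ interior I := by
      intro i
      have hsub : Set.Ioo (z i.castSucc) (z i.succ) ⊆ I :=
        fun t ht => hI.out (hzI i.castSucc) (hzI i.succ) (Set.mem_Icc.mpr ⟨le_of_lt ht.1, le_of_lt ht.2⟩)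
      exact isOpen_Ioo.subset_interior_iff.mpr hsub
    have hIcc : ∀ i : Fin (n + 1), Set.Icc (z i.castSucc) (z i.succ) ⊆ I := by
      intro i t ht
      exact hI.out (hzI i.castSucc) (hzI i.succ) ht
    have hrolle : ∀ i : Fin (n + 1), ∃ c ∈ Set.Ioo (z i.castSucc) (z i.succ),
        derivWithin g I c = 0 := by
      intro i
      have hlt : z i.castSucc < z i.succ := hz Fin.castSucc_lt_succ
      refine exists_hasDerivAt_eq_zero (f := g) (f' := derivWithin g I) hlt ?_ ?_ ?_
      · exact hg.continuousOn.mono (hIcc i)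
      · rw [hz0 i.castSucc, hz0 i.succ]
      · intro t ht
        have htI : I ∈ nhds t := mem_interior_iff_mem_nhds.mp (hIoo i ht)
        have hdiff : DifferentiableWithinAt ℝ g I t := by
          refine (hg.differentiableOn ?_) t (hIoo i ht |> interior_subset)
          simp
        exact (hdiff.hasDerivWithinAt).hasDerivAt htI
    choose c hc hc0 using hrolle
    have hcmono : StrictMono c := by
      rw [Fin.strictMono_iff_lt_succ]
      intro i
      calc c i.castSucc < z i.castSucc.succ := (hc i.castSucc).2
        _ ≤ z i.succ.castSucc := by
            apply hz.monotone
            rw [Fin.le_def]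
            simp
        _ < c i.succ := (hc i.succ).1
    have hcI : ∀ i, c i ∈ I := fun i => hIcc i ⟨le_of_lt (hc i).1, le_of_lt (hc i).2⟩
    have hg' : ContDiffOn ℝ n (derivWithin g I) I := by
      apply hg.derivWithin hU
      exact_mod_cast le_refl _
    obtain ⟨ξ, ⟨hξI, hξmem⟩, hξ0⟩ := IH (derivWithin g I) hg' c hcmono hcI hc0
    refine ⟨ξ, ⟨hξI, ?_, ?_⟩, ?_⟩
    · exact le_trans (le_of_lt (hc 0).1) hξmem.1
    · refine le_trans hξmem.2 (le_of_lt ?_)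
      have : (Fin.last n).succ = Fin.last (n + 1) := rfl
      simpa [this] using (hc (Fin.last n)).2
    · rw [iteratedDerivWithin_succ']
      exact hξ0
lemma mvt_dd {I : Set ℝ} (hI : I.OrdConnected) (hU : UniqueDiffOn ℝ I) (n : ℕ) (f : ℝ → ℝ)
    (hf : ContDiffOn ℝ n f I) (s : Finset ℝ) (hcard : s.card = n + 1)
    (hsI : ∀ z ∈ s, z ∈ I) :
    ∃ ξ ∈ I, (∃ a ∈ s, a ≤ ξ) ∧ (∃ b ∈ s, ξ ≤ b) ∧
      iteratedDerivWithin n f I ξ = (n.factorial : ℝ) * dd f s := by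
  classical
  have hpos : 0 < s.card := by omega
  set z : Fin (n + 1) → ℝ := fun i => (s.orderIsoOfFin hcard i : ℝ) with hzdef
  have hzmono : StrictMono z := by
    intro a b hab
    exact Subtype.coe_lt_coe.mpr ((s.orderIsoOfFin hcard).lt_iff_lt.mpr hab)
  have hzs : ∀ i, z i ∈ s := fun i => (s.orderIsoOfFin hcard i).2
  have hzI : ∀ i, z i ∈ I := fun i => hsI _ (hzs i)
  set P := Lagrange.interpolate s id f with hP
  set g : ℝ → ℝ := f - fun t => P.eval t with hg
  have hinj : Set.InjOn (id : ℝ → ℝ) s := Function.injective_id.injOn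
  have hgc : ContDiffOn ℝ n g I := hf.sub (poly_contDiff P).contDiffOn
  have hg0 : ∀ i, g (z i) = 0 := by
    intro i
    have : Polynomial.eval (id (z i)) P = f (z i) :=
      Lagrange.eval_interpolate_at_node f hinj (hzs i)
    simp only [hg, Pi.sub_apply]
    rw [show Polynomial.eval (z i) P = f (z i) from this]
    ring
  obtain ⟨ξ, ⟨hξI, hξicc⟩, hξ0⟩ := iterated_rolle hI hU n g hgc z hzmono hzI hg0
  have hnatdeg : P.natDegree ≤ n := by
    have hd := Lagrange.degree_interpolate_le f hinj
    rw [hcard, Nat.add_sub_cancel] at hd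
    exact Polynomial.natDegree_le_iff_degree_le.mpr hd
  have hsub : iteratedDerivWithin n g I ξ
      = iteratedDerivWithin n f I ξ - iteratedDerivWithin n (fun t => P.eval t) I ξ :=
    iteratedDerivWithin_sub hξI hU (hf ξ hξI) ((poly_contDiff P).contDiffOn ξ hξI)
  have hvalue : iteratedDerivWithin n (fun t => P.eval t) I ξ = (n.factorial : ℝ) * dd f s := by
    rw [iteratedDerivWithin_poly P hU n ξ hξI,
      eval_iterate_derivative_of_natDegree_le P n hnatdeg,
      coeff_interpolate f s n hcard]
  refine ⟨ξ, hξI, ⟨z 0, hzs 0, hξicc.1⟩, ⟨z (Fin.last n), hzs _, hξicc.2⟩, ?_⟩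
  rw [hsub, hvalue] at hξ0
  linarith
lemma dd_image {m : ℕ} (f : ℝ → ℝ) (v : Fin m → ℝ) (hv : Function.Injective v) :
    dd f (Finset.image v Finset.univ)
      = ∑ i, f (v i) / ∏ j ∈ Finset.univ.erase i, (v i - v j) := by
  classical
  rw [dd, Finset.sum_image (fun a _ b _ h => hv h)]
  refine Finset.sum_congr rfl fun i _ => ?_
  rw [← Finset.image_erase hv, Finset.prod_image]
  intro a ha b hb h
  exact hv h

lemma sum_abs_le {k : ℕ} (y : Fin (k + 1) → ℝ) (hy : Monotone y) (x : ℝ) (C : ℝ)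
    (hA : |min x (y 0) - (∑ i, y i) / ((k : ℝ) + 1)| ≤ C)
    (hB : |max x (y (Fin.last k)) - (∑ i, y i) / ((k : ℝ) + 1)| ≤ C) :
    ∑ i, |x - y i| ≤ ((k : ℝ) + 1) * C := by
  classical
  set T : ℝ := ∑ i, y i with hT
  set N : ℝ := (k : ℝ) + 1 with hN
  have hNpos : 0 < N := by positivity
  set A : ℝ := min x (y 0) with hA'
  set B : ℝ := max x (y (Fin.last k)) with hB'
  have hAyi : ∀ i, A ≤ y i := fun i => le_trans (min_le_right _ _) (hy (Fin.zero_le i))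
  have hyiB : ∀ i, y i ≤ B := fun i => le_trans (hy (Fin.le_last i)) (le_max_right _ _)
  have hAx : A ≤ x := min_le_left _ _
  have hxB : x ≤ B := le_max_left _ _
  have hsumA : ∑ i, (y i - A) = T - N * A := by
    rw [Finset.sum_sub_distrib, Finset.sum_const, Finset.card_univ, Fintype.card_fin]
    push_cast [hN]; ring
  have hsumB : ∑ i, (B - y i) = N * B - T := by
    rw [Finset.sum_sub_distrib, Finset.sum_const, Finset.card_univ, Fintype.card_fin]
    push_cast [hN]; ring
  have hTA : T - N * A ≤ N * C := by
    have h1 : T / N - A ≤ |A - T / N| := by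
      rw [abs_sub_comm]; exact le_abs_self _
    have h2 := mul_le_mul_of_nonneg_left (le_trans h1 hA) (le_of_lt hNpos)
    have hTN : N * (T / N) = T := by field_simp
    rw [mul_sub, hTN] at h2
    linarith
  have hBT : N * B - T ≤ N * C := by
    have h1 : B - T / N ≤ |B - T / N| := le_abs_self _
    have h2 := mul_le_mul_of_nonneg_left (le_trans h1 hB) (le_of_lt hNpos)
    have hTN : N * (T / N) = T := by field_simp
    rw [mul_sub, hTN] at h2
    linarith
  have hC0 : 0 ≤ C := le_trans (abs_nonneg _) hA
  rcases eq_or_lt_of_le (le_trans hAx hxB) with heq | hAB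
  · -- A = B : all points coincide with x
    have hxA : x = A := le_antisymm (by rw [heq]; exact hxB) hAx
    have hyieq : ∀ i, y i = A := fun i => le_antisymm (by rw [heq]; exact hyiB i) (hAyi i)
    have : ∑ i, |x - y i| = 0 := by
      refine Finset.sum_eq_zero fun i _ => ?_
      rw [hxA, hyieq i, sub_self, abs_zero]
    rw [this]; positivity
  · set l : ℝ := (B - x) / (B - A) with hl
    have hBA : 0 < B - A := by linarith
    have hl0 : 0 ≤ l := div_nonneg (by linarith) (le_of_lt hBA)
    have hl1 : 1 - l = (x - A) / (B - A) := by rw [hl]; field_simp; ring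
    have hl1' : 0 ≤ 1 - l := by rw [hl1]; exact div_nonneg (by linarith) (le_of_lt hBA)
    have hxcomb : x = l * A + (1 - l) * B := by
      rw [hl1, hl]; field_simp; ring
    have hterm : ∀ i, |x - y i| ≤ l * (y i - A) + (1 - l) * (B - y i) := by
      intro i
      have hrw : x - y i = l * (A - y i) + (1 - l) * (B - y i) := by
        rw [hxcomb]; ring
      rw [hrw]
      refine le_trans (abs_add_le _ _) ?_
      rw [abs_mul, abs_mul, abs_of_nonneg hl0, abs_of_nonneg hl1',
        abs_sub_comm A (y i), abs_of_nonneg (by linarith [hAyi i]),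
        abs_of_nonneg (by linarith [hyiB i])]
    refine le_trans (Finset.sum_le_sum fun i _ => hterm i) ?_
    rw [Finset.sum_add_distrib, ← Finset.mul_sum, ← Finset.mul_sum, hsumA, hsumB]
    nlinarith
theorem lagrange_interpolation_deriv_bound (k : ℕ) (f : ℝ → ℝ) (I : Set ℝ)
    (hI : I.OrdConnected) (hf : ContDiffOn ℝ (k + 1) f I)
    (y : Fin (k + 1) → ℝ) (hy : StrictMono y) (hyI : ∀ i, y i ∈ I)
    (C M : ℝ)
    (hC : ∀ x ∈ I, |x - (∑ i, y i) / (k + 1)| ≤ C)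
    (hM : ∀ x ∈ I, |iteratedDerivWithin (k + 1) f I x| ≤ M) :
    ∀ x ∈ I,
      |iteratedDerivWithin k f I x -
        ∑ i, (k.factorial : ℝ) * f (y i) / ∏ j ∈ Finset.univ.erase i, (y i - y j)| ≤ C * M := by
  classical
  intro x hx
  have hC0 : 0 ≤ C := le_trans (abs_nonneg _) (hC x hx)
  have hM0 : 0 ≤ M := le_trans (abs_nonneg _) (hM x hx)
  have hconv : Convex ℝ I := convex_iff_ordConnected.mpr hI
  -- rewrite the sum via dd
  have hsum_eq : ∑ i, (k.factorial : ℝ) * f (y i) / ∏ j ∈ Finset.univ.erase i, (y i - y j)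
      = (k.factorial : ℝ) * dd f (Finset.image y Finset.univ) := by
    rw [dd_image f y hy.injective, Finset.mul_sum]
    refine Finset.sum_congr rfl fun i _ => ?_
    rw [mul_div_assoc]
  rw [hsum_eq]
  rcases Nat.eq_zero_or_pos k with rfl | hkpos
  · -- k = 0 : direct mean value theorem
    have hY : (Finset.image y Finset.univ) = {y 0} := by
      rw [show (Finset.univ : Finset (Fin 1)) = {0} from rfl, Finset.image_singleton]
    have hdd : dd f (Finset.image y Finset.univ) = f (y 0) := by
      rw [hY, dd]
      simp
    rw [hdd]
    simp only [Nat.factorial_zero, Nat.cast_one, one_mul, iteratedDerivWithin_zero]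
    by_cases hxy : x = y 0
    · rw [hxy, sub_self, abs_zero]
      positivity
    · have hUD : UniqueDiffOn ℝ I := by
        apply uniqueDiffOn_convex hconv
        have hsub : Set.Ioo (min x (y 0)) (max x (y 0)) ⊆ I := by
          intro t ht
          have hmem1 : min x (y 0) ∈ I := by
            rcases min_cases x (y 0) with ⟨h, _⟩ | ⟨h, _⟩ <;> rw [h]
            exacts [hx, hyI 0]
          have hmem2 : max x (y 0) ∈ I := by
            rcases max_cases x (y 0) with ⟨h, _⟩ | ⟨h, _⟩ <;> rw [h]
            exacts [hx, hyI 0]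
          exact hI.out hmem1 hmem2 ⟨le_of_lt ht.1, le_of_lt ht.2⟩
        refine Set.Nonempty.mono (interior_mono hsub) ?_
        rw [interior_Ioo]
        exact Set.nonempty_Ioo.mpr (min_lt_max.mpr hxy)
      have hmvt : ‖f x - f (y 0)‖ ≤ M * ‖x - y 0‖ := by
        refine hconv.norm_image_sub_le_of_norm_hasDerivWithin_le
          (f' := iteratedDerivWithin 1 f I) (fun t ht => ?_) (fun t ht => ?_) (hyI 0) hx
        · have hdiff : DifferentiableWithinAt ℝ f I t := by
            refine (hf.differentiableOn ?_) t ht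
            simp
          have := hdiff.hasDerivWithinAt
          rwa [show iteratedDerivWithin 1 f I t = derivWithin f I t from
            congrFun iteratedDerivWithin_one t]
        · rw [Real.norm_eq_abs]
          exact hM t ht
      rw [Real.norm_eq_abs, Real.norm_eq_abs] at hmvt
      have hxC : |x - y 0| ≤ C := by
        have := hC x hx
        simpa using this
      calc |f x - f (y 0)| ≤ M * |x - y 0| := hmvt
        _ ≤ M * C := mul_le_mul_of_nonneg_left hxC hM0
        _ = C * M := mul_comm M C
  ·
    -- k ≥ 1
    set Y := Finset.image y Finset.univ with hYdef
    set F := iteratedDerivWithin k f I with hFdef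
    have hylast : y 0 < y (Fin.last k) := by
      apply hy
      rw [Fin.lt_def]
      simpa using hkpos
    have hUD : UniqueDiffOn ℝ I := by
      apply uniqueDiffOn_convex hconv
      have hsub : Set.Ioo (y 0) (y (Fin.last k)) ⊆ I :=
        fun t ht => hI.out (hyI 0) (hyI _) ⟨ht.1.le, ht.2.le⟩
      refine Set.Nonempty.mono (interior_mono hsub) ?_
      rw [interior_Ioo]
      exact Set.nonempty_Ioo.mpr hylast
    have hfk1 : ContDiffOn ℝ ((k + 1 : ℕ)) f I := by exact_mod_cast hf
    have hfk : ContDiffOn ℝ (k : ℕ) f I := hfk1.of_le (by exact_mod_cast Nat.le_succ k)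
    have hFderiv : ∀ t ∈ I, HasDerivWithinAt F (iteratedDerivWithin (k + 1) f I t) I t := by
      intro t ht
      have hdiff := (hfk1.differentiableOn_iteratedDerivWithin (m := k)
        (by exact_mod_cast Nat.lt_succ_self k) hUD) t ht
      have h2 := hdiff.hasDerivWithinAt
      rwa [show iteratedDerivWithin (k + 1) f I t = derivWithin F I t from
        congrFun iteratedDerivWithin_succ t]
    have hsum_y : ∑ i, |x - y i| ≤ ((k : ℝ) + 1) * C := by
      apply sum_abs_le y hy.monotone x C
      · apply hC
        rcases min_cases x (y 0) with ⟨h, _⟩ | ⟨h, _⟩ <;> rw [h]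
        exacts [hx, hyI 0]
      · apply hC
        rcases max_cases x (y (Fin.last k)) with ⟨h, _⟩ | ⟨h, _⟩ <;> rw [h]
        exacts [hx, hyI _]
    have hmain : ∀ δ : ℝ, 0 < δ →
        |F x - (k.factorial : ℝ) * dd f Y| ≤ C * M + 2 * M * δ := by
      intro δ hδ
      obtain ⟨p, q, hpq, hIccI, hlen, hxp, hxq⟩ :
          ∃ p q : ℝ, p < q ∧ Set.Icc p q ⊆ I ∧ q - p ≤ δ ∧ p ≤ x ∧ x ≤ q := by
        by_cases hxy : x < y (Fin.last k)
        · have hqI : min (y (Fin.last k)) (x + δ) ∈ I := by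
            apply hI.out hx (hyI (Fin.last k))
            exact ⟨le_min hxy.le (by linarith), min_le_left _ _⟩
          refine ⟨x, min (y (Fin.last k)) (x + δ), lt_min hxy (by linarith), ?_, ?_,
            le_refl x, le_min hxy.le (by linarith)⟩
          · intro t ht
            exact hI.out hx hqI ht
          · have := min_le_right (y (Fin.last k)) (x + δ); linarith
        · push_neg at hxy
          have hy0x : y 0 < x := lt_of_lt_of_le hylast hxy
          have hpI : max (y 0) (x - δ) ∈ I := by
            apply hI.out (hyI 0) hx
            exact ⟨le_max_left _ _, max_le hy0x.le (by linarith)⟩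
          refine ⟨max (y 0) (x - δ), x, max_lt hy0x (by linarith), ?_, ?_,
            max_le hy0x.le (by linarith), le_refl x⟩
          · intro t ht
            exact hI.out hpI hx ht
          · have := le_max_right (y 0) (x - δ); linarith
      -- choose a step size avoiding the nodes
      have hbad : {h : ℝ | ∃ i : Fin (k + 1), ∃ j : Fin (k + 1),
          p + ((i : ℕ) + 1) * h = y j}.Finite := by
        apply Set.Finite.subset (Set.finite_range
          (fun ij : Fin (k + 1) × Fin (k + 1) => (y ij.2 - p) / ((ij.1 : ℕ) + 1)))
        rintro h ⟨i, j, hij⟩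
        refine ⟨(i, j), ?_⟩
        have hne : ((i : ℕ) : ℝ) + 1 ≠ 0 := by positivity
        field_simp
        linarith
      have hinf : (Set.Ioo (0 : ℝ) ((q - p) / ((k : ℝ) + 2))).Infinite :=
        Set.Ioo_infinite (div_pos (by linarith) (by positivity))
      obtain ⟨h, hmem⟩ := (hinf.diff hbad).nonempty
      obtain ⟨⟨hh0, hhlt⟩, hgood0⟩ := hmem
      have hgood : ∀ (i j : Fin (k + 1)), p + ((i : ℕ) + 1) * h ≠ y j := by
        intro i j heq
        exact hgood0 ⟨i, j, heq⟩
      set c : Fin (k + 1) → ℝ := fun i => p + ((i : ℕ) + 1) * h with hcdef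
      have hcmono : StrictMono c := by
        intro a b hab
        have h1 : ((a : ℕ) : ℝ) + 1 < ((b : ℕ) : ℝ) + 1 := by
          have h0 : ((a : ℕ) : ℝ) < ((b : ℕ) : ℝ) := by exact_mod_cast Fin.lt_def.mp hab
          linarith
        simp only [hcdef]
        nlinarith
      have hcIoo : ∀ i, c i ∈ Set.Ioo p q := by
        intro i
        have hik : ((i : ℕ) : ℝ) + 1 ≤ (k : ℝ) + 1 := by
          have h0 : ((i : ℕ) : ℝ) ≤ (k : ℝ) := by exact_mod_cast Nat.lt_succ_iff.mp i.isLt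
          linarith
        have h2 : ((k : ℝ) + 2) * h < q - p := by
          rw [lt_div_iff₀ (by positivity)] at hhlt
          linarith
        constructor
        · simp only [hcdef]
          nlinarith
        · simp only [hcdef]
          nlinarith
      have hcI : ∀ i, c i ∈ I := fun i => hIccI ⟨(hcIoo i).1.le, (hcIoo i).2.le⟩
      have hcx : ∀ i, |c i - x| ≤ δ := by
        intro i
        rw [abs_le]
        have h1 := (hcIoo i).1
        have h2 := (hcIoo i).2
        constructor <;> linarith
      set a : ℕ → Fin (k + 1) → ℝ := fun j i => if (i : ℕ) < j then c i else y i with hadef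
      have hainj : ∀ j, Function.Injective (a j) := by
        intro j i1 i2 heq
        simp only [hadef] at heq
        by_cases h1 : (i1 : ℕ) < j <;> by_cases h2 : (i2 : ℕ) < j <;>
          simp only [h1, h2, if_true, if_false] at heq
        · exact hcmono.injective heq
        · exact absurd heq (hgood i1 i2)
        · exact absurd heq.symm (hgood i2 i1)
        · exact hy.injective heq
      set A : ℕ → Finset ℝ := fun j => Finset.image (a j) Finset.univ with hAdef
      have haI : ∀ j i, a j i ∈ I := by
        intro j i
        simp only [hadef]
        split
        · exact hcI i
        · exact hyI i
      have hA0 : A 0 = Y := by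
        simp only [hAdef, hYdef]
        apply Finset.image_congr
        intro i _
        simp [hadef]
      have hAtop : A (k + 1) = Finset.image c Finset.univ := by
        simp only [hAdef]
        apply Finset.image_congr
        intro i _
        simp [hadef, i.isLt]
      set D : ℕ → ℝ := fun j => (k.factorial : ℝ) * dd f (A j) with hDdef
      have hstep : ∀ i : Fin (k + 1),
          |D ((i : ℕ) + 1) - D (i : ℕ)| ≤ (|x - y i| + δ) * M / ((k : ℝ) + 1) := by
        intro jf
        set j : ℕ := (jf : ℕ) with hjdef
        have hjlt : j < k + 1 := jf.isLt
        have hjf : (⟨j, hjlt⟩ : Fin (k + 1)) = jf := rfl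
        set B : Finset ℝ := Finset.image (a j) (Finset.univ.erase jf) with hBdef
        have hBeq : Finset.image (a (j + 1)) (Finset.univ.erase jf) = B := by
          apply Finset.image_congr
          intro i hi
          have hij : i ≠ jf := (Finset.mem_erase.mp hi).1
          have hijn : (i : ℕ) ≠ j := fun hcc => hij (Fin.ext hcc)
          simp only [hadef]
          rcases Nat.lt_or_ge (i : ℕ) j with hlt | hge
          · simp [hlt, Nat.lt_succ_of_lt hlt]
          · have h1 : ¬ (i : ℕ) < j := not_lt.mpr hge
            have h2 : ¬ (i : ℕ) < j + 1 := by omega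
            simp [h1, h2]
        have hAj : A j = insert (y jf) B := by
          simp only [hAdef]
          conv_lhs => rw [← Finset.insert_erase (Finset.mem_univ jf)]
          rw [Finset.image_insert]
          congr 1
          simp [hadef, hjdef]
        have hAj1 : A (j + 1) = insert (c jf) B := by
          simp only [hAdef]
          conv_lhs => rw [← Finset.insert_erase (Finset.mem_univ jf)]
          rw [Finset.image_insert, hBeq]
          congr 1
          simp [hadef, hjdef]
        have hyB : y jf ∉ B := by
          rw [hBdef, Finset.mem_image]
          rintro ⟨i, hi, hieq⟩
          have hij : i ≠ jf := (Finset.mem_erase.mp hi).1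
          simp only [hadef] at hieq
          split at hieq
          · exact hgood i jf hieq
          · exact hij (hy.injective hieq)
        have hcB : c jf ∉ B := by
          rw [hBdef, Finset.mem_image]
          rintro ⟨i, hi, hieq⟩
          have hij : i ≠ jf := (Finset.mem_erase.mp hi).1
          simp only [hadef] at hieq
          split at hieq
          · exact hij (hcmono.injective hieq)
          · exact hgood jf i hieq.symm
        have hcy : c jf ≠ y jf := hgood jf jf
        have hrec := dd_rec f hcy hcB hyB
        have hBcard : B.card = k := by
          rw [hBdef, Finset.card_image_of_injective _ (hainj j),
            Finset.card_erase_of_mem (Finset.mem_univ jf)]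
          simp
        set S := insert (c jf) (insert (y jf) B) with hSdef
        have hScard : S.card = (k + 1) + 1 := by
          have hc1 : c jf ∉ insert (y jf) B := by
            rw [Finset.mem_insert]
            rintro (hcc | hcc)
            · exact hcy hcc
            · exact hcB hcc
          rw [hSdef, Finset.card_insert_of_notMem hc1,
            Finset.card_insert_of_notMem hyB, hBcard]
        have hSI : ∀ z ∈ S, z ∈ I := by
          intro z hz
          rw [hSdef, Finset.mem_insert, Finset.mem_insert] at hz
          rcases hz with rfl | rfl | hz
          · exact hcI jf
          · exact hyI jf
          · rw [hBdef, Finset.mem_image] at hz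
            obtain ⟨i, _, rfl⟩ := hz
            exact haI j i
        obtain ⟨ξ, hξI, _, _, hξeq⟩ := mvt_dd hI hUD (k + 1) f hfk1 S hScard hSI
        have hfactpos : (0 : ℝ) < ((k + 1).factorial : ℝ) := by
          exact_mod_cast Nat.factorial_pos (k + 1)
        have hddS : |dd f S| ≤ M / (((k + 1).factorial : ℝ)) := by
          have hMξ := hM ξ hξI
          rw [show iteratedDerivWithin (k + 1) f I ξ
              = ((k + 1).factorial : ℝ) * dd f S from hξeq, abs_mul,
            abs_of_pos hfactpos] at hMξ
          rw [le_div_iff₀ hfactpos]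
          linarith [mul_comm (((k + 1).factorial : ℝ)) |dd f S|]
        have htri : |c jf - y jf| ≤ |x - y jf| + δ := by
          calc |c jf - y jf| ≤ |c jf - x| + |x - y jf| := abs_sub_le _ _ _
            _ ≤ δ + |x - y jf| := by linarith [hcx jf]
            _ = |x - y jf| + δ := by ring
        have hfactk : (0 : ℝ) < (k.factorial : ℝ) := by
          exact_mod_cast Nat.factorial_pos k
        calc |D (j + 1) - D j|
            = (k.factorial : ℝ) * |dd f (A (j + 1)) - dd f (A j)| := by
              rw [hDdef]
              rw [← mul_sub, abs_mul, abs_of_pos hfactk]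
          _ = (k.factorial : ℝ) * (|c jf - y jf| * |dd f S|) := by
              rw [hAj1, hAj, hrec, abs_mul]
          _ ≤ (k.factorial : ℝ) * ((|x - y jf| + δ) * (M / (((k + 1).factorial : ℝ)))) := by
              refine mul_le_mul_of_nonneg_left ?_ (le_of_lt hfactk)
              exact mul_le_mul htri hddS (abs_nonneg _) (by positivity)
          _ = (|x - y jf| + δ) * M / ((k : ℝ) + 1) := by
              rw [Nat.factorial_succ]
              push_cast
              field_simp
      have habs : |D (k + 1) - D 0| ≤
          ((∑ i, |x - y i|) + ((k : ℝ) + 1) * δ) * M / ((k : ℝ) + 1) := by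
        have htel : D (k + 1) - D 0
            = ∑ j ∈ Finset.range (k + 1), (D (j + 1) - D j) :=
          (Finset.sum_range_sub D (k + 1)).symm
        rw [htel]
        refine le_trans (Finset.abs_sum_le_sum_abs _ _) ?_
        have hconvsum : ∑ j ∈ Finset.range (k + 1), |D (j + 1) - D j|
            = ∑ i : Fin (k + 1), |D ((i : ℕ) + 1) - D (i : ℕ)| :=
          (Fin.sum_univ_eq_sum_range (fun j => |D (j + 1) - D j|) (k + 1)).symm
        rw [hconvsum]
        refine le_trans (Finset.sum_le_sum fun i _ => hstep i) ?_
        have hsum2 : ∑ i : Fin (k + 1), (|x - y i| + δ) * M / ((k : ℝ) + 1)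
            = ((∑ i, |x - y i|) + ((k : ℝ) + 1) * δ) * M / ((k : ℝ) + 1) := by
          rw [← Finset.sum_div, ← Finset.sum_mul, Finset.sum_add_distrib,
            Finset.sum_const, Finset.card_univ, Fintype.card_fin]
          push_cast
          ring_nf
        exact le_of_eq hsum2
      have hcardtop : (A (k + 1)).card = k + 1 := by
        rw [hAtop, Finset.card_image_of_injective _ hcmono.injective,
          Finset.card_univ, Fintype.card_fin]
      have hmemtop : ∀ z ∈ A (k + 1), z ∈ I := by
        intro z hz
        rw [hAdef, Finset.mem_image] at hz
        obtain ⟨i, _, rfl⟩ := hz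
        exact haI (k + 1) i
      obtain ⟨η, hηI, ⟨a1, ha1, ha1le⟩, ⟨b1, hb1, hb1le⟩, hηeq⟩ :=
        mvt_dd hI hUD k f hfk (A (k + 1)) hcardtop hmemtop
      have hηp : p ≤ η := by
        rw [hAtop, Finset.mem_image] at ha1
        obtain ⟨i, _, rfl⟩ := ha1
        exact le_trans (hcIoo i).1.le ha1le
      have hηq : η ≤ q := by
        rw [hAtop, Finset.mem_image] at hb1
        obtain ⟨i, _, rfl⟩ := hb1
        exact le_trans hb1le (hcIoo i).2.le
      have hηx : |x - η| ≤ δ := by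
        rw [abs_le]
        constructor <;> linarith
      have hmvtF : |F x - F η| ≤ M * δ := by
        have hmm := hconv.norm_image_sub_le_of_norm_hasDerivWithin_le hFderiv
          (fun t ht => by rw [Real.norm_eq_abs]; exact hM t ht) hηI hx
        rw [Real.norm_eq_abs, Real.norm_eq_abs] at hmm
        calc |F x - F η| ≤ M * |x - η| := hmm
          _ ≤ M * δ := mul_le_mul_of_nonneg_left hηx hM0
      have hFη : F η = D (k + 1) := hηeq
      have hD0 : D 0 = (k.factorial : ℝ) * dd f Y := by simp only [hDdef]; rw [hA0]
      calc |F x - (k.factorial : ℝ) * dd f Y|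
          = |(F x - F η) + (D (k + 1) - D 0)| := by
            rw [hFη, ← hD0]
            congr 1
            ring
        _ ≤ |F x - F η| + |D (k + 1) - D 0| := abs_add_le _ _
        _ ≤ M * δ + ((∑ i, |x - y i|) + ((k : ℝ) + 1) * δ) * M / ((k : ℝ) + 1) := by
            exact add_le_add hmvtF habs
        _ ≤ C * M + 2 * M * δ := by
            have hk1pos : (0 : ℝ) < (k : ℝ) + 1 := by positivity
            have hexp : ((∑ i, |x - y i|) + ((k : ℝ) + 1) * δ) * M / ((k : ℝ) + 1)
                = (∑ i, |x - y i|) * (M / ((k : ℝ) + 1)) + M * δ := by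
              field_simp
            rw [hexp]
            have hb1 : (∑ i, |x - y i|) * (M / ((k : ℝ) + 1))
                ≤ (((k : ℝ) + 1) * C) * (M / ((k : ℝ) + 1)) :=
              mul_le_mul_of_nonneg_right hsum_y (by positivity)
            have hb2 : (((k : ℝ) + 1) * C) * (M / ((k : ℝ) + 1)) = C * M := by
              field_simp
            linarith
    by_contra hcon
    push_neg at hcon
    set d : ℝ := |F x - (k.factorial : ℝ) * dd f Y| - C * M with hd
    have hdpos : 0 < d := by simp only [hd]; linarith
    have hδpos : 0 < d / (2 * M + 1) := by positivity
    have hcontr := hmain (d / (2 * M + 1)) hδpos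
    have h2M : 2 * M * (d / (2 * M + 1)) < d := by
      have hlt : 2 * M * (d / (2 * M + 1)) = (2 * M * d) / (2 * M + 1) := by ring
      rw [hlt, div_lt_iff₀ (by positivity : (0:ℝ) < 2 * M + 1)]
      nlinarith
    linarith
end

section
/- Let h : [a,b] → ℝ be monotonic and suppose b − a is a positive integer multiple of π/n. Then |∫_a^b h(θ)·sin(2nθ) dθ| ≤ |h(b) − h(a)|/n. -/
open intervalIntegral MeasureTheory Real

set_option maxHeartbeats 1000000 in
private lemma key_mono (n : ℕ) (hn : 1 ≤ n) (a b : ℝ) (h : ℝ → ℝ)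
    (hmono : MonotoneOn h (Set.Icc a b)) (k : ℕ) (hk : 1 ≤ k)
    (hab : b - a = k * (Real.pi / n)) :
    |∫ θ in a..b, h θ * Real.sin (2 * n * θ)| ≤ (h b - h a) / n := by
  have hn' : (0:ℝ) < n := by exact_mod_cast hn
  have hπ := Real.pi_pos
  set δ : ℝ := Real.pi / (2*n) with hδ
  have hδpos : 0 < δ := by positivity
  have h2δ : 2*δ = Real.pi / n := by rw [hδ]; field_simp
  set c : ℕ → ℝ := fun j => a + j * (2*δ) with hc
  have hc0 : c 0 = a := by simp [hc]
  have hck : c k = b := by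
    have : b = a + k * (Real.pi / n) := by linarith
    rw [hc, h2δ]; simp; linarith
  have hcmono : ∀ {i j : ℕ}, i ≤ j → c i ≤ c j := by
    intro i j hij
    have : (i:ℝ) ≤ j := by exact_mod_cast hij
    simp only [hc]
    nlinarith
  have hab' : a ≤ b := by rw [← hc0, ← hck]; exact hcmono (Nat.zero_le k)
  have hcb : ∀ j : ℕ, j ≤ k → c j ≤ b := fun j hj => hck ▸ hcmono hj
  have hca : ∀ j : ℕ, a ≤ c j := fun j => hc0 ▸ hcmono (Nat.zero_le j)
  -- integrability of the main integrand on subintervals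
  have hint : ∀ x y : ℝ, a ≤ x → x ≤ y → y ≤ b →
      IntervalIntegrable (fun θ => h θ * Real.sin (2*n*θ)) volume x y := by
    intro x y hax hxy hyb
    have hm : MonotoneOn h (Set.uIcc x y) :=
      hmono.mono (by rw [Set.uIcc_of_le hxy]; exact Set.Icc_subset_Icc hax hyb)
    exact hm.intervalIntegrable.mul_continuousOn (Continuous.continuousOn (by fun_prop))
  set s : ℝ → ℝ := fun θ => Real.sin (2*n*(a+θ)) with hs
  have hscont : Continuous s := by fun_prop
  -- integrability of shifted monotone times s on [0, δ]
  have hintsh : ∀ d : ℝ, a ≤ d → d + δ ≤ b →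
      IntervalIntegrable (fun θ => h (d + θ) * s θ) volume 0 δ := by
    intro d hda hdb
    have hm : MonotoneOn (fun θ => h (d + θ)) (Set.uIcc 0 δ) := by
      intro u hu v hv huv
      rw [Set.uIcc_of_le hδpos.le] at hu hv
      exact hmono ⟨by linarith [hu.1], by linarith [hu.2]⟩
        ⟨by linarith [hv.1], by linarith [hv.2]⟩ (by linarith)
    exact hm.intervalIntegrable.mul_continuousOn hscont.continuousOn
  set F : ℕ → ℝ → ℝ := fun j θ => (h (c j + θ) - h (c j + δ + θ)) * s θ with hF
  have hintF : ∀ j : ℕ, j < k → IntervalIntegrable (F j) volume 0 δ := by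
    intro j hj
    have h1 : c j + 2*δ ≤ b := by
      have : c (j+1) ≤ b := hcb _ hj
      simp only [hc] at this ⊢
      push_cast at this
      nlinarith
    have i1 := hintsh (c j) (hca j) (by linarith)
    have i2 := hintsh (c j + δ) (by linarith [hca j, hδpos]) (by linarith)
    have := i1.sub (by simpa [add_assoc] using i2)
    apply this.congr
    · intro θ _; simp only [hF, add_assoc]; ring
  -- sin shift identities
  have sin_shift : ∀ (j : ℕ) (θ : ℝ), Real.sin (2*n*(c j + θ)) = s θ := by
    intro j θ
    have e : 2*(n:ℝ)*(c j + θ) = 2*n*(a+θ) + j * (2*Real.pi) := by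
      simp only [hc, hδ]; field_simp; ring
    rw [e, Real.sin_add_nat_mul_two_pi]
  have sin_shift2 : ∀ θ : ℝ, s (δ + θ) = - s θ := by
    intro θ
    have e : 2*(n:ℝ)*(a+(δ+θ)) = 2*n*(a+θ) + Real.pi := by
      simp only [hδ]; field_simp; ring
    simp only [hs]
    rw [e, Real.sin_add_pi]
  -- each piece equals ∫₀^δ F j
  have piece : ∀ j : ℕ, j < k →
      (∫ θ in c j..c (j+1), h θ * Real.sin (2*n*θ)) = ∫ θ in (0:ℝ)..δ, F j θ := by
    intro j hj
    have h1 : c j + 2*δ ≤ b := by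
      have : c (j+1) ≤ b := hcb _ hj
      simp only [hc] at this ⊢
      push_cast at this
      nlinarith
    have e1 : c (j+1) = c j + 2*δ := by simp only [hc]; push_cast; ring
    have i1 := hintsh (c j) (hca j) (by linarith)
    have i2' := hintsh (c j + δ) (by linarith [hca j, hδpos]) (by linarith)
    calc (∫ θ in c j..c (j+1), h θ * Real.sin (2*n*θ))
        = ∫ θ in (0:ℝ)..2*δ, h (c j + θ) * Real.sin (2*n*(c j + θ)) := by
          rw [intervalIntegral.integral_comp_add_left (fun θ => h θ * Real.sin (2*n*θ)) (c j)]
          rw [e1]; norm_num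
      _ = ∫ θ in (0:ℝ)..2*δ, h (c j + θ) * s θ := by
          apply intervalIntegral.integral_congr
          intro θ _; dsimp only; rw [sin_shift]
      _ = (∫ θ in (0:ℝ)..δ, h (c j + θ) * s θ) + ∫ θ in δ..2*δ, h (c j + θ) * s θ := by
          rw [intervalIntegral.integral_add_adjacent_intervals i1]
          · have hm : MonotoneOn (fun θ => h (c j + θ)) (Set.uIcc δ (2*δ)) := by
              intro u hu v hv huv
              rw [Set.uIcc_of_le (by linarith : δ ≤ 2*δ)] at hu hv
              exact hmono ⟨by linarith [hu.1, hca j], by linarith [hu.2]⟩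
                ⟨by linarith [hv.1, hca j], by linarith [hv.2]⟩ (by linarith)
            exact hm.intervalIntegrable.mul_continuousOn hscont.continuousOn
      _ = (∫ θ in (0:ℝ)..δ, h (c j + θ) * s θ) + ∫ θ in (0:ℝ)..δ, h (c j + (δ + θ)) * s (δ + θ) := by
          congr 1
          rw [intervalIntegral.integral_comp_add_left (fun θ => h (c j + θ) * s θ) δ]
          norm_num [two_mul]
      _ = (∫ θ in (0:ℝ)..δ, h (c j + θ) * s θ) - ∫ θ in (0:ℝ)..δ, h (c j + δ + θ) * s θ := by
          congr 1
          rw [← intervalIntegral.integral_neg]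
          apply intervalIntegral.integral_congr
          intro θ _
          dsimp only; rw [sin_shift2]; ring
      _ = ∫ θ in (0:ℝ)..δ, F j θ := by
          rw [← intervalIntegral.integral_sub i1 (by simpa [add_assoc] using i2')]
          apply intervalIntegral.integral_congr
          intro θ _; simp [hF, add_assoc]; ring
  -- sum the pieces
  have split : (∫ θ in a..b, h θ * Real.sin (2*n*θ)) = ∫ θ in (0:ℝ)..δ, ∑ j ∈ Finset.range k, F j θ := by
    rw [intervalIntegral.integral_finset_sum (fun j hj => hintF j (Finset.mem_range.mp hj))]
    rw [← hc0, ← hck,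
      ← intervalIntegral.sum_integral_adjacent_intervals (a := c)
      (fun j hj => hint _ _ (hca j) (hcmono (Nat.le_succ j)) (hcb _ hj))]
    exact Finset.sum_congr rfl fun j hj => piece j (Finset.mem_range.mp hj)
  -- nonnegativity of h b - h a
  have hba : 0 ≤ h b - h a := by
    have := hmono ⟨le_refl a, hab'⟩ ⟨hab', le_refl b⟩ hab'
    linarith
  -- pointwise bound on the sum
  have sum_bound : ∀ θ ∈ Set.Icc (0:ℝ) δ,
      |∑ j ∈ Finset.range k, F j θ| ≤ (h b - h a) * |s θ| := by
    intro θ hθ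
    obtain ⟨hθ0, hθδ⟩ := hθ
    have hmem : ∀ j : ℕ, j < k → c j + θ ∈ Set.Icc a b ∧ c j + δ + θ ∈ Set.Icc a b := by
      intro j hj
      have h1 : c j + 2*δ ≤ b := by
        have : c (j+1) ≤ b := hcb _ hj
        simp only [hc] at this ⊢; push_cast at this; nlinarith
      have := hca j
      exact ⟨⟨by linarith, by linarith⟩, ⟨by linarith, by linarith⟩⟩
    have factored : ∑ j ∈ Finset.range k, F j θ
        = (∑ j ∈ Finset.range k, (h (c j + θ) - h (c j + δ + θ))) * s θ := by
      rw [Finset.sum_mul]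
    rw [factored, abs_mul]
    apply mul_le_mul_of_nonneg_right _ (abs_nonneg _)
    -- |∑ (h(cj+θ) - h(cj+δ+θ))| ≤ h b - h a
    have hterm : ∀ j : ℕ, j < k → h (c j + θ) - h (c j + δ + θ) ≤ 0 := by
      intro j hj
      obtain ⟨m1, m2⟩ := hmem j hj
      have := hmono m1 m2 (by linarith)
      linarith
    have habs : |∑ j ∈ Finset.range k, (h (c j + θ) - h (c j + δ + θ))|
        = ∑ j ∈ Finset.range k, (h (c j + δ + θ) - h (c j + θ)) := by
      rw [abs_of_nonpos (Finset.sum_nonpos fun j hj => hterm j (Finset.mem_range.mp hj))]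
      rw [← Finset.sum_neg_distrib]
      exact Finset.sum_congr rfl fun j _ => by ring
    rw [habs]
    -- key telescoping bound by induction
    have key : ∀ m : ℕ, m ≤ k →
        ∑ j ∈ Finset.range m, (h (c j + δ + θ) - h (c j + θ)) ≤ h (c m) - h a := by
      intro m
      induction m with
      | zero => intro _; simp [hc0]
      | succ m ih =>
        intro hm
        have hm' : m < k := hm
        rw [Finset.sum_range_succ]
        have := ih (le_of_lt hm')
        obtain ⟨mm1, mm2⟩ := hmem m hm'
        have hcm : c m ∈ Set.Icc a b := ⟨hca m, hcb m (le_of_lt hm')⟩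
        have hcm1 : c (m+1) ∈ Set.Icc a b := ⟨hca _, hcb _ hm⟩
        have e1 : h (c m) ≤ h (c m + θ) := hmono hcm mm1 (by linarith)
        have e2 : h (c m + δ + θ) ≤ h (c (m+1)) := by
          apply hmono mm2 hcm1
          simp only [hc]; push_cast; linarith
        linarith
      
    calc ∑ j ∈ Finset.range k, (h (c j + δ + θ) - h (c j + θ)) ≤ h (c k) - h a := key k le_rfl
      _ = h b - h a := by rw [hck]
  -- integrate the bound
  rw [split]
  have step1 : |∫ θ in (0:ℝ)..δ, ∑ j ∈ Finset.range k, F j θ|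
      ≤ ∫ θ in (0:ℝ)..δ, |∑ j ∈ Finset.range k, F j θ| :=
    intervalIntegral.abs_integral_le_integral_abs hδpos.le
  have hintsum : IntervalIntegrable (fun θ => ∑ j ∈ Finset.range k, F j θ) volume 0 δ := by
    have e : (fun θ => ∑ j ∈ Finset.range k, F j θ) = ∑ j ∈ Finset.range k, F j := by
      funext θ; simp
    rw [e]
    exact IntervalIntegrable.sum _ fun j hj => hintF j (Finset.mem_range.mp hj)
  have step2 : (∫ θ in (0:ℝ)..δ, |∑ j ∈ Finset.range k, F j θ|)
      ≤ ∫ θ in (0:ℝ)..δ, (h b - h a) * |s θ| := by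
    apply intervalIntegral.integral_mono_on hδpos.le hintsum.abs
    · exact (continuous_const.mul hscont.abs).intervalIntegrable _ _
    · exact sum_bound
  have step3 : (∫ θ in (0:ℝ)..δ, (h b - h a) * |s θ|) = (h b - h a) / n := by
    rw [intervalIntegral.integral_const_mul]
    have e1 : (∫ θ in (0:ℝ)..δ, |s θ|) = ∫ θ in a..(a+δ), |Real.sin (2*n*θ)| := by
      rw [intervalIntegral.integral_comp_add_left (fun θ => |Real.sin (2*n*θ)|) a]
      norm_num
    have e2 : (∫ θ in a..(a+δ), |Real.sin (2*n*θ)|) = (2*(n:ℝ))⁻¹ * ∫ u in (2*n*a)..(2*n*a + Real.pi), |Real.sin u| := by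
      rw [intervalIntegral.integral_comp_mul_left (fun u => |Real.sin u|) (by positivity : 2*(n:ℝ) ≠ 0)]
      have : 2*(n:ℝ)*(a+δ) = 2*n*a + Real.pi := by rw [hδ]; field_simp
      rw [this]
      simp [smul_eq_mul]
    have habs_per : Function.Periodic (fun x => |Real.sin x|) Real.pi := by
      intro x; simp [Real.sin_add_pi]
    have e3 : (∫ u in (2*n*a)..(2*n*a + Real.pi), |Real.sin u|) = ∫ u in (0:ℝ)..Real.pi, |Real.sin u| := by
      have := habs_per.intervalIntegral_add_eq (2*n*a) 0
      simpa using this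
    have e4 : (∫ u in (0:ℝ)..Real.pi, |Real.sin u|) = 2 := by
      have : (∫ u in (0:ℝ)..Real.pi, |Real.sin u|) = ∫ u in (0:ℝ)..Real.pi, Real.sin u := by
        apply intervalIntegral.integral_congr
        intro u hu
        rw [Set.uIcc_of_le Real.pi_pos.le] at hu
        exact abs_of_nonneg (Real.sin_nonneg_of_nonneg_of_le_pi hu.1 hu.2)
      rw [this, integral_sin]
      norm_num
    rw [e1, e2, e3, e4]
    field_simp
  calc |∫ θ in (0:ℝ)..δ, ∑ j ∈ Finset.range k, F j θ| ≤ _ := step1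
    _ ≤ _ := step2
    _ = _ := step3

theorem monotone_sin_integral_bound (n : ℕ) (hn : 1 ≤ n) (a b : ℝ) (h : ℝ → ℝ)
    (hmono : MonotoneOn h (Set.Icc a b) ∨ AntitoneOn h (Set.Icc a b))
    (k : ℕ) (hk : 1 ≤ k) (hab : b - a = k * (Real.pi / n)) :
    |∫ θ in a..b, h θ * Real.sin (2 * n * θ)| ≤ |h b - h a| / n := by
  have hn' : (0:ℝ) < n := by exact_mod_cast hn
  have hk' : (0:ℝ) < k := by exact_mod_cast hk
  have hπ := Real.pi_pos
  have hab' : a ≤ b := by nlinarith [mul_pos hk' (div_pos hπ hn')]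
  rcases hmono with hm | hm
  · have hba : 0 ≤ h b - h a := by
      have := hm ⟨le_refl a, hab'⟩ ⟨hab', le_refl b⟩ hab'
      linarith
    rw [abs_of_nonneg hba]
    exact key_mono n hn a b h hm k hk hab
  · have hm' : MonotoneOn (fun θ => -h θ) (Set.Icc a b) := fun x hx y hy hxy => by
      simp only [neg_le_neg_iff]
      exact hm hx hy hxy
    have := key_mono n hn a b (fun θ => -h θ) hm' k hk hab
    have hba : h b ≤ h a := hm ⟨le_refl a, hab'⟩ ⟨hab', le_refl b⟩ hab'
    have e : (∫ θ in a..b, (fun θ => -h θ) θ * Real.sin (2 * n * θ))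
        = -∫ θ in a..b, h θ * Real.sin (2 * n * θ) := by
      rw [← intervalIntegral.integral_neg]
      apply intervalIntegral.integral_congr
      intro θ _; ring
    rw [e, abs_neg] at this
    calc |∫ θ in a..b, h θ * Real.sin (2 * n * θ)| ≤ (-h b - -h a) / n := this
      _ = |h b - h a| / n := by rw [abs_of_nonpos (by linarith)]; ring_nf
end

section
/- Let n ≥ 1 and let I = [aπ/n, bπ/n] with integers a < b. If θ₀ ∈ I, then 4/3 ≤ ∫_I sin(2n(θ−θ₀))/(θ−θ₀) dθ ≤ 4. -/
open MeasureTheory intervalIntegral Real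

lemma pos_of_deriv (f f' : ℝ → ℝ) (h0 : f 0 = 0)
    (hd : ∀ x, HasDerivAt f (f' x) x) (hd0 : ∀ x, 0 ≤ x → 0 ≤ f' x) :
    ∀ x, 0 ≤ x → 0 ≤ f x := by
  intro x hx
  have hm : MonotoneOn f (Set.Ici (0:ℝ)) := by
    apply monotoneOn_of_deriv_nonneg (convex_Ici 0)
      (fun y _ => (hd y).continuousAt.continuousWithinAt)
    · intro y hy
      exact ((hd y).differentiableAt).differentiableWithinAt
    · intro y hy
      rw [(hd y).deriv]
      exact hd0 y (le_of_lt (by simpa using hy))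
  have := hm (Set.self_mem_Ici) (Set.mem_Ici.mpr hx) hx
  linarith [h0]

lemma sin_ge_t3 : ∀ x : ℝ, 0 ≤ x → x - x^3/6 ≤ sin x := by
  have := pos_of_deriv (fun x => Real.sin x - (x - x^3/6))
    (fun x => Real.cos x - (1 - x^2/2)) (by simp)
    (fun x => by
      have h1 := Real.hasDerivAt_sin x
      have h2 : HasDerivAt (fun x : ℝ => x - x^3/6) (1 - x^2/2) x := by
        have := ((hasDerivAt_id x).sub (((hasDerivAt_pow 3 x)).div_const 6))
        exact this.congr_deriv (by ring)
      exact h1.sub h2)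
    (fun x _ => by nlinarith [Real.one_sub_sq_div_two_le_cos (x := x)])
  intro x hx; linarith [this x hx]

lemma cos_le_t4 : ∀ x : ℝ, 0 ≤ x → cos x ≤ 1 - x^2/2 + x^4/24 := by
  have := pos_of_deriv (fun x => (1 - x^2/2 + x^4/24) - Real.cos x)
    (fun x => (sin x - (x - x^3/6))) (by simp)
    (fun x => by
      have h1 := Real.hasDerivAt_cos x
      have h2 : HasDerivAt (fun x : ℝ => 1 - x^2/2 + x^4/24) (-x + x^3/6) x := by
        have := (((hasDerivAt_const x (1:ℝ)).sub ((hasDerivAt_pow 2 x).div_const 2)).add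
          ((hasDerivAt_pow 4 x).div_const 24))
        exact this.congr_deriv (by ring)
      exact (h2.sub h1).congr_deriv (by ring))
    (fun x hx => by linarith [sin_ge_t3 x hx])
  intro x hx; linarith [this x hx]

lemma sin_le_t5 : ∀ x : ℝ, 0 ≤ x → sin x ≤ x - x^3/6 + x^5/120 := by
  have := pos_of_deriv (fun x => (x - x^3/6 + x^5/120) - Real.sin x)
    (fun x => (1 - x^2/2 + x^4/24) - cos x) (by simp)
    (fun x => by
      have h1 := Real.hasDerivAt_sin x
      have h2 : HasDerivAt (fun x : ℝ => x - x^3/6 + x^5/120) (1 - x^2/2 + x^4/24) x := by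
        have := (((hasDerivAt_id x).sub ((hasDerivAt_pow 3 x).div_const 6)).add
          ((hasDerivAt_pow 5 x).div_const 120))
        exact this.congr_deriv (by ring)
      exact h2.sub h1)
    (fun x hx => by linarith [cos_le_t4 x hx])
  intro x hx; linarith [this x hx]

lemma cos_ge_t6 : ∀ x : ℝ, 0 ≤ x → 1 - x^2/2 + x^4/24 - x^6/720 ≤ cos x := by
  have := pos_of_deriv (fun x => Real.cos x - (1 - x^2/2 + x^4/24 - x^6/720))
    (fun x => (x - x^3/6 + x^5/120) - sin x) (by simp)
    (fun x => by
      have h1 := Real.hasDerivAt_cos x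
      have h2 : HasDerivAt (fun x : ℝ => 1 - x^2/2 + x^4/24 - x^6/720)
          (-x + x^3/6 - x^5/120) x := by
        have := ((((hasDerivAt_const x (1:ℝ)).sub ((hasDerivAt_pow 2 x).div_const 2)).add
          ((hasDerivAt_pow 4 x).div_const 24)).sub ((hasDerivAt_pow 6 x).div_const 720))
        exact this.congr_deriv (by ring)
      exact (h1.sub h2).congr_deriv (by ring))
    (fun x hx => by linarith [sin_le_t5 x hx])
  intro x hx; linarith [this x hx]

lemma sin_ge_t7 : ∀ x : ℝ, 0 ≤ x → x - x^3/6 + x^5/120 - x^7/5040 ≤ sin x := by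
  have := pos_of_deriv (fun x => Real.sin x - (x - x^3/6 + x^5/120 - x^7/5040))
    (fun x => cos x - (1 - x^2/2 + x^4/24 - x^6/720)) (by simp)
    (fun x => by
      have h1 := Real.hasDerivAt_sin x
      have h2 : HasDerivAt (fun x : ℝ => x - x^3/6 + x^5/120 - x^7/5040)
          (1 - x^2/2 + x^4/24 - x^6/720) x := by
        have := ((((hasDerivAt_id x).sub ((hasDerivAt_pow 3 x).div_const 6)).add
          ((hasDerivAt_pow 5 x).div_const 120)).sub ((hasDerivAt_pow 7 x).div_const 5040))
        exact this.congr_deriv (by ring)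
      exact h1.sub h2)
    (fun x hx => by linarith [cos_ge_t6 x hx])
  intro x hx; linarith [this x hx]

noncomputable def sg (x : ℝ) : ℝ := Real.sin x / x

lemma sg_intble (a b : ℝ) : IntervalIntegrable sg volume a b := by
  apply IntervalIntegrable.mono_fun' (g := fun _ => (1:ℝ)) intervalIntegrable_const
  · exact ((Real.measurable_sin.div measurable_id).aestronglyMeasurable).restrict
  · filter_upwards with x
    rw [Real.norm_eq_abs, sg, abs_div]
    rcases eq_or_ne x 0 with h|h
    · simp [h]
    · rw [div_le_one (abs_pos.mpr h)]; exact Real.abs_sin_le_abs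

-- integrand of arch m
noncomputable def fA (m : ℕ) (u : ℝ) : ℝ := Real.sin u / (u + m * π)

lemma fA_intble (m : ℕ) : IntervalIntegrable (fA m) volume 0 π := by
  apply IntervalIntegrable.mono_fun' (g := fun _ => (1:ℝ)) intervalIntegrable_const
  · exact ((Real.measurable_sin.div (measurable_id.add_const _)).aestronglyMeasurable).restrict
  · rw [Set.uIoc_of_le Real.pi_pos.le]
    filter_upwards [ae_restrict_mem measurableSet_Ioc] with u hu
    have h1 : 0 < u := hu.1
    have h2 : 0 < u + m * π := by positivity
    rw [Real.norm_eq_abs, fA, abs_div, abs_of_pos h2, div_le_one h2]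
    calc |Real.sin u| ≤ |u| := Real.abs_sin_le_abs
    _ = u := abs_of_pos h1
    _ ≤ u + m * π := le_add_of_nonneg_right (by positivity)

lemma fA_nonneg (m : ℕ) {u : ℝ} (hu : u ∈ Set.Icc (0:ℝ) π) : 0 ≤ fA m u := by
  apply div_nonneg (Real.sin_nonneg_of_nonneg_of_le_pi hu.1 hu.2)
  have := hu.1; positivity

noncomputable def A (m : ℕ) : ℝ := ∫ u in (0:ℝ)..π, fA m u

lemma A_nonneg (m : ℕ) : 0 ≤ A m :=
  integral_nonneg Real.pi_pos.le (fun u hu => fA_nonneg m hu)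

lemma A_anti (m : ℕ) : A (m+1) ≤ A m := by
  apply integral_mono_on Real.pi_pos.le (fA_intble (m+1)) (fA_intble m)
  intro u hu
  rcases eq_or_lt_of_le hu.1 with h|h
  · simp [fA, ← h]
  · apply div_le_div_of_nonneg_left (Real.sin_nonneg_of_nonneg_of_le_pi hu.1 hu.2)
      (by positivity)
    push_cast; nlinarith [Real.pi_pos]

lemma arch_eq (m : ℕ) : (∫ t in ((m:ℝ)*π)..((m+1:ℝ)*π), sg t) = (-1)^m * A m := by
  have : (∫ t in ((m:ℝ)*π)..((m+1:ℝ)*π), sg t) = ∫ u in (0:ℝ)..π, sg (u + m*π) := by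
    rw [integral_comp_add_right (fun t => sg t) ((m:ℝ)*π)]
    norm_num; ring_nf
  rw [this, A, ← intervalIntegral.integral_const_mul]
  apply integral_congr
  intro u _
  simp only [sg, fA]
  rw [Real.sin_add_nat_mul_pi, mul_div_assoc]


lemma sg_neg (x : ℝ) : sg (-x) = sg x := by
  simp [sg, neg_div_neg_eq]

noncomputable def Si (x : ℝ) : ℝ := ∫ t in (0:ℝ)..x, sg t
noncomputable def Sm (m : ℕ) : ℝ := Si (m * π)

lemma Si_split (x y : ℝ) : Si y = Si x + ∫ t in x..y, sg t := by
  rw [Si, Si, integral_add_adjacent_intervals (sg_intble 0 x) (sg_intble x y)]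

lemma Sm_succ (m : ℕ) : Sm (m+1) = Sm m + (-1)^m * A m := by
  have := Si_split ((m:ℝ)*π) (((m:ℝ)+1)*π)
  rw [arch_eq] at this
  simpa [Sm] using this

lemma Sm_zero : Sm 0 = 0 := by simp [Sm, Si]

lemma Sm_even_nonneg (j : ℕ) : 0 ≤ Sm (2*j) := by
  induction j with
  | zero => simp [Sm_zero]
  | succ j ih =>
    have h1 := Sm_succ (2*j)
    have h2 := Sm_succ (2*j+1)
    have h3 := A_anti (2*j)
    have e1 : ((-1:ℝ))^(2*j) = 1 := by simp [pow_mul]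
    have e2 : ((-1:ℝ))^(2*j+1) = -1 := by simp [pow_succ, pow_mul]
    have : Sm (2*(j+1)) = Sm (2*j) + A (2*j) - A (2*j+1) := by
      rw [show 2*(j+1) = 2*j+1+1 by ring, h2, h1, e1, e2]; ring
    linarith

lemma Sm_odd_le (j : ℕ) : Sm (2*j+1) ≤ Sm 1 := by
  induction j with
  | zero => simp
  | succ j ih =>
    have h1 := Sm_succ (2*j+1)
    have h2 := Sm_succ (2*j+2)
    have h3 := A_anti (2*j+1)
    have e1 : ((-1:ℝ))^(2*j+1) = -1 := by simp [pow_succ, pow_mul]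
    have e2 : ((-1:ℝ))^(2*j+2) = 1 := by simp [pow_succ, pow_mul]
    have : Sm (2*(j+1)+1) = Sm (2*j+1) - A (2*j+1) + A (2*j+2) := by
      rw [show 2*(j+1)+1 = 2*j+1+1+1 by ring, h2]
      rw [show 2*j+2 = 2*j+1+1 by ring, h1, e1, e2]; ring
    linarith

lemma Sm_even_ge_S2 (j : ℕ) (hj : 1 ≤ j) : Sm 2 ≤ Sm (2*j) := by
  induction j with
  | zero => omega
  | succ j ih =>
    rcases Nat.eq_or_lt_of_le hj with h|h
    · simp [← h]
    · have hj' : 1 ≤ j := by omega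
      have h1 := Sm_succ (2*j)
      have h2 := Sm_succ (2*j+1)
      have h3 := A_anti (2*j)
      have e1 : ((-1:ℝ))^(2*j) = 1 := by simp [pow_mul]
      have e2 : ((-1:ℝ))^(2*j+1) = -1 := by simp [pow_succ, pow_mul]
      have : Sm (2*(j+1)) = Sm (2*j) + A (2*j) - A (2*j+1) := by
        rw [show 2*(j+1) = 2*j+1+1 by ring, h2, h1, e1, e2]; ring
      have := ih hj'
      linarith

lemma Sm_nonneg (m : ℕ) : 0 ≤ Sm m := by
  rcases Nat.even_or_odd m with ⟨j, hj⟩ | ⟨j, hj⟩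
  · rw [hj, ← two_mul]; exact Sm_even_nonneg j
  · rw [hj]
    have := Sm_succ (2*j)
    have e1 : ((-1:ℝ))^(2*j) = 1 := by simp [pow_mul]
    rw [this, e1]
    have := Sm_even_nonneg j
    have := A_nonneg (2*j)
    linarith

lemma Sm_le_S1 (m : ℕ) : Sm m ≤ Sm 1 := by
  rcases Nat.even_or_odd m with ⟨j, hj⟩ | ⟨j, hj⟩
  · rw [hj, ← two_mul]
    have h1 := Sm_succ (2*j)
    have e1 : ((-1:ℝ))^(2*j) = 1 := by simp [pow_mul]
    rw [e1] at h1
    have := Sm_odd_le j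
    have := A_nonneg (2*j)
    linarith
  · rw [hj]; exact Sm_odd_le j

lemma Sm_ge_S2 (m : ℕ) (hm : 1 ≤ m) : Sm 2 ≤ Sm m := by
  rcases Nat.even_or_odd m with ⟨j, hj⟩ | ⟨j, hj⟩
  · rw [hj, ← two_mul]
    exact Sm_even_ge_S2 j (by omega)
  · rw [hj]
    rcases Nat.eq_zero_or_pos j with h|h
    · subst h
      have h1 := Sm_succ 1
      have e1 : ((-1:ℝ))^1 = -1 := by norm_num
      rw [e1] at h1
      have := A_nonneg 1
      simp only [Nat.reduceAdd] at h1
      norm_num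
      linarith
    · have h1 := Sm_succ (2*j)
      have e1 : ((-1:ℝ))^(2*j) = 1 := by simp [pow_mul]
      rw [e1] at h1
      have := Sm_even_ge_S2 j h
      have := A_nonneg (2*j)
      linarith

lemma sg_sign (m : ℕ) {t : ℝ} (h1 : (m:ℝ)*π ≤ t) (h2 : t ≤ ((m:ℝ)+1)*π) :
    0 ≤ (-1)^m * sg t := by
  have hmp : (0:ℝ) ≤ (m:ℝ)*π := by positivity
  have ht : 0 ≤ t := hmp.trans h1
  have hs : Real.sin t = (-1)^m * Real.sin (t - m*π) := by
    have := Real.sin_add_nat_mul_pi (t - m*π) m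
    simpa using this
  have hsn : 0 ≤ Real.sin (t - m*π) :=
    Real.sin_nonneg_of_nonneg_of_le_pi (by linarith) (by linarith)
  have : (-1:ℝ)^m * sg t = Real.sin (t - m*π) / t := by
    simp only [sg, hs]
    rw [mul_div_assoc, ← mul_assoc, ← pow_add]
    simp [pow_mul, ← two_mul]
  rw [this]
  exact div_nonneg hsn ht

lemma Si_arch_bounds (x : ℝ) (hx : 0 ≤ x) :
    0 ≤ Si x ∧ Si x ≤ Sm 1 ∧ (π ≤ x → Sm 2 ≤ Si x) := by
  have hπ := Real.pi_pos
  set k : ℤ := ⌊x/π⌋ with hk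
  have hk0 : 0 ≤ k := Int.floor_nonneg.mpr (by positivity)
  set m : ℕ := k.toNat with hmdef
  have hmk : (m:ℝ) = (k:ℝ) := by
    rw [hmdef]; exact_mod_cast Int.toNat_of_nonneg hk0
  have hm1 : (m:ℝ)*π ≤ x := by
    rw [hmk]
    have := Int.floor_le (x/π)
    calc (k:ℝ)*π ≤ (x/π)*π := by nlinarith
    _ = x := by field_simp
  have hm2 : x < ((m:ℝ)+1)*π := by
    rw [hmk]
    have := Int.lt_floor_add_one (x/π)
    calc x = (x/π)*π := by field_simp
    _ < ((k:ℝ)+1)*π := by nlinarith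
  have hsplit1 : Si x = Sm m + ∫ t in ((m:ℝ)*π)..x, sg t := by
    rw [Sm, ← Si_split]
  have hsplit2 : Sm (m+1) = Si x + ∫ t in x..(((m:ℝ)+1)*π), sg t := by
    have := Si_split x (((m:ℝ)+1)*π)
    rw [Sm]; push_cast; exact this
  have hmge : π ≤ x → 1 ≤ m := by
    intro hpx
    by_contra h
    push_neg at h
    interval_cases m
    simp at hm2
    linarith
  rcases Nat.even_or_odd m with hev | hod
  · have e1 : ((-1:ℝ))^m = 1 := hev.neg_one_pow
    have hsgn : ∀ t ∈ Set.Icc ((m:ℝ)*π) (((m:ℝ)+1)*π), 0 ≤ sg t := by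
      intro t ht
      have := sg_sign m ht.1 ht.2
      rwa [e1, one_mul] at this
    have I1 : 0 ≤ ∫ t in ((m:ℝ)*π)..x, sg t :=
      integral_nonneg hm1 (fun t ht => hsgn t ⟨ht.1, ht.2.trans hm2.le⟩)
    have I2 : 0 ≤ ∫ t in x..(((m:ℝ)+1)*π), sg t :=
      integral_nonneg hm2.le (fun t ht => hsgn t ⟨hm1.trans ht.1, ht.2⟩)
    refine ⟨by linarith [Sm_nonneg m], by linarith [Sm_le_S1 (m+1)], fun hpx => ?_⟩
    linarith [Sm_ge_S2 m (hmge hpx)]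
  · have e1 : ((-1:ℝ))^m = -1 := hod.neg_one_pow
    have hsgn : ∀ t ∈ Set.Icc ((m:ℝ)*π) (((m:ℝ)+1)*π), 0 ≤ -sg t := by
      intro t ht
      have := sg_sign m ht.1 ht.2
      rwa [e1, neg_one_mul] at this
    have I1 : 0 ≤ ∫ t in ((m:ℝ)*π)..x, -sg t :=
      integral_nonneg hm1 (fun t ht => hsgn t ⟨ht.1, ht.2.trans hm2.le⟩)
    have I2 : 0 ≤ ∫ t in x..(((m:ℝ)+1)*π), -sg t :=
      integral_nonneg hm2.le (fun t ht => hsgn t ⟨hm1.trans ht.1, ht.2⟩)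
    rw [intervalIntegral.integral_neg] at I1 I2
    refine ⟨by linarith [Sm_nonneg (m+1)], by linarith [Sm_le_S1 m], fun hpx => ?_⟩
    linarith [Sm_ge_S2 (m+1) (by omega)]

lemma poly_integral : ∫ x in (0:ℝ)..π, (1 - x^2/6 + x^4/120) = π - π^3/18 + π^5/600 := by
  have hd : ∀ x ∈ Set.uIcc (0:ℝ) π, HasDerivAt (fun y : ℝ => y - y^3/18 + y^5/600)
      (1 - x^2/6 + x^4/120) x := by
    intro x _
    have := ((hasDerivAt_id x).sub ((hasDerivAt_pow 3 x).div_const 18)).add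
      ((hasDerivAt_pow 5 x).div_const 600)
    exact this.congr_deriv (by ring)
  rw [integral_eq_sub_of_hasDerivAt hd (by apply Continuous.intervalIntegrable; continuity)]
  norm_num

lemma poly7_integral : ∫ x in (0:ℝ)..π, (1 - x^2/6 + x^4/120 - x^6/5040)
    = π - π^3/18 + π^5/600 - π^7/35280 := by
  have hd : ∀ x ∈ Set.uIcc (0:ℝ) π, HasDerivAt
      (fun y : ℝ => y - y^3/18 + y^5/600 - y^7/35280)
      (1 - x^2/6 + x^4/120 - x^6/5040) x := by
    intro x _
    have := (((hasDerivAt_id x).sub ((hasDerivAt_pow 3 x).div_const 18)).add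
      ((hasDerivAt_pow 5 x).div_const 600)).sub ((hasDerivAt_pow 7 x).div_const 35280)
    exact this.congr_deriv (by ring)
  rw [integral_eq_sub_of_hasDerivAt hd (by apply Continuous.intervalIntegrable; continuity)]
  norm_num

lemma Sm_one : Sm 1 = ∫ t in (0:ℝ)..π, sg t := by
  rw [Sm, Si]; norm_num

lemma S1_upper : Sm 1 ≤ π - π^3/18 + π^5/600 := by
  rw [Sm_one, ← poly_integral]
  apply integral_mono_on Real.pi_pos.le (sg_intble 0 π)
    (by apply Continuous.intervalIntegrable; continuity)
  intro x hx
  rcases eq_or_lt_of_le hx.1 with h|h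
  · rw [← h]; norm_num [sg]
  · rw [sg, div_le_iff₀ h]
    have h5 := sin_le_t5 x hx.1
    nlinarith
lemma S1_lower : π - π^3/18 + π^5/600 - π^7/35280 ≤ Sm 1 := by
  rw [Sm_one, ← poly7_integral]
  apply integral_mono_ae_restrict Real.pi_pos.le
    (by apply Continuous.intervalIntegrable; continuity) (sg_intble 0 π)
  have hne : ∀ᵐ t : ℝ ∂volume, t ≠ 0 := by
    rw [ae_iff]
    have e : {t : ℝ | ¬ t ≠ 0} = {0} := by ext t; simp
    rw [e]; exact Real.volume_singleton
  filter_upwards [ae_restrict_of_ae hne, ae_restrict_mem measurableSet_Icc] with t ht hmem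
  have ht0 : 0 < t := lt_of_le_of_ne hmem.1 (Ne.symm ht)
  rw [sg, le_div_iff₀ ht0]
  have h7 := sin_ge_t7 t ht0.le
  nlinarith

lemma A1_upper : A 1 ≤ 3/(2*π) := by
  have hπ := Real.pi_pos
  have hcalc : ∫ u in (0:ℝ)..π, Real.sin u * (1/π - u/(2*π^2)) = 3/(2*π) := by
    have hd : ∀ u ∈ Set.uIcc (0:ℝ) π, HasDerivAt
        (fun u : ℝ => (-Real.cos u) * (1/π - u/(2*π^2)) - Real.sin u/(2*π^2))
        (Real.sin u * (1/π - u/(2*π^2))) u := by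
      intro u _
      have h1 : HasDerivAt (fun u : ℝ => -Real.cos u) (Real.sin u) u := by
        exact (Real.hasDerivAt_cos u).neg.congr_deriv (by ring)
      have h2 : HasDerivAt (fun u : ℝ => 1/π - u/(2*π^2)) (-(1/(2*π^2))) u := by
        have := (hasDerivAt_const u (1/π)).sub ((hasDerivAt_id u).div_const (2*π^2))
        exact this.congr_deriv (by ring)
      have := (h1.mul h2).sub ((Real.hasDerivAt_sin u).div_const (2*π^2))
      exact this.congr_deriv (by ring)
    rw [integral_eq_sub_of_hasDerivAt hd (by apply Continuous.intervalIntegrable; continuity)]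
    rw [Real.cos_pi, Real.sin_pi, Real.cos_zero, Real.sin_zero]
    field_simp
    ring
  rw [A, ← hcalc]
  apply integral_mono_on Real.pi_pos.le (fA_intble 1)
    (by apply Continuous.intervalIntegrable; continuity)
  intro u hu
  simp only [fA]
  have hs : 0 ≤ Real.sin u := Real.sin_nonneg_of_nonneg_of_le_pi hu.1 hu.2
  have hd1 : (0:ℝ) < u + π := by linarith [hu.1]
  have key : 1/(u+π) ≤ 1/π - u/(2*π^2) := by
    have e : (1/π - u/(2*π^2)) - 1/(u+π) = u*(π - u)/(2*π^2*(u+π)) := by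
      field_simp; ring
    have : 0 ≤ u*(π - u)/(2*π^2*(u+π)) := by
      apply div_nonneg (mul_nonneg hu.1 (by linarith [hu.2])) (by positivity)
    linarith
  have : Real.sin u * (1/(u+π)) ≤ Real.sin u * (1/π - u/(2*π^2)) :=
    mul_le_mul_of_nonneg_left key hs
  calc Real.sin u / (u + (1:ℕ)*π) = Real.sin u * (1/(u+π)) := by
        push_cast; rw [one_mul, mul_one_div]
  _ ≤ _ := this

lemma S1_le_two : Sm 1 ≤ 2 := by
  have l : (3.14:ℝ) < π := Real.pi_gt_d2
  have u : π < 3.15 := Real.pi_lt_d2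
  have p3 : (3.14:ℝ)^3 < π^3 := pow_lt_pow_left₀ l (by norm_num) (by norm_num)
  have p5 : π^5 < (3.15:ℝ)^5 := pow_lt_pow_left₀ u (by positivity) (by norm_num)
  have := S1_upper
  nlinarith

lemma S2_ge : (4:ℝ)/3 ≤ Sm 2 := by
  have h2 : Sm 2 = Sm 1 - A 1 := by
    have := Sm_succ 1
    norm_num at this
    linarith
  have l : (3.14:ℝ) < π := Real.pi_gt_d2
  have u : π < 3.15 := Real.pi_lt_d2
  have p3 : π^3 < (3.15:ℝ)^3 := pow_lt_pow_left₀ u (by positivity) (by norm_num)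
  have p5 : (3.14:ℝ)^5 < π^5 := pow_lt_pow_left₀ l (by norm_num) (by norm_num)
  have p7 : π^7 < (3.15:ℝ)^7 := pow_lt_pow_left₀ u (by positivity) (by norm_num)
  have hA : A 1 ≤ 3/(2*π) := A1_upper
  have hdiv : 3/(2*π) < 3/(2*3.14) :=
    div_lt_div_of_pos_left (by norm_num) (by norm_num) (by linarith)
  have := S1_lower
  rw [h2]
  nlinarith

-- change of variables
lemma sub_step (A B θ₀ c : ℝ) (hc : c ≠ 0) :
    (∫ θ in A..B, Real.sin (c * (θ - θ₀)) / (θ - θ₀))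
      = ∫ x in (c*(A - θ₀))..(c*(B - θ₀)), sg x := by
  have h1 : (∫ θ in A..B, Real.sin (c * (θ - θ₀)) / (θ - θ₀))
      = ∫ u in (A - θ₀)..(B - θ₀), Real.sin (c * u) / u := by
    rw [← integral_comp_sub_right (fun u => Real.sin (c * u) / u) θ₀]
  have h2 : ∀ u : ℝ, Real.sin (c * u) / u = c * sg (c * u) := by
    intro u
    rcases eq_or_ne u 0 with h|h
    · simp [h, sg]
    · rw [sg, mul_div_assoc']
      rw [mul_div_mul_left _ _ hc]
  rw [h1]
  simp_rw [h2]
  rw [intervalIntegral.integral_const_mul, integral_comp_mul_left (fun x => sg x) hc]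
  rw [smul_eq_mul, ← mul_assoc, mul_inv_cancel₀ hc, one_mul]

theorem sine_integral_in (n : ℕ) (hn : 1 ≤ n) (a b : ℤ) (hab : a < b) (θ₀ : ℝ)
    (hθ₀ : θ₀ ∈ Set.Icc (a * Real.pi / n) (b * Real.pi / n)) :
    (4 : ℝ) / 3 ≤ (∫ θ in (a * Real.pi / n)..(b * Real.pi / n),
        Real.sin (2 * n * (θ - θ₀)) / (θ - θ₀)) ∧
    (∫ θ in (a * Real.pi / n)..(b * Real.pi / n),
        Real.sin (2 * n * (θ - θ₀)) / (θ - θ₀)) ≤ 4 := by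
  have hπ := Real.pi_pos
  have hn0 : (0:ℝ) < n := by exact_mod_cast hn
  have hc : (2:ℝ) * n ≠ 0 := by positivity
  rw [sub_step _ _ _ _ hc]
  set x : ℝ := 2*n*θ₀ - 2*a*π with hxdef
  set y : ℝ := 2*b*π - 2*n*θ₀ with hydef
  have ex : 2*(n:ℝ) * (a*π/n - θ₀) = -x := by field_simp; ring
  have ey : 2*(n:ℝ) * (b*π/n - θ₀) = y := by field_simp; ring
  rw [ex, ey]
  have hx0 : 0 ≤ x := by
    have := hθ₀.1
    have : (a:ℝ)*π ≤ n*θ₀ := by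
      rw [div_le_iff₀ hn0] at this; linarith
    linarith
  have hy0 : 0 ≤ y := by
    have := hθ₀.2
    have : (n:ℝ)*θ₀ ≤ b*π := by
      rw [le_div_iff₀ hn0] at this; linarith
    linarith
  have hxy : x + y = 2*((b:ℝ)-a)*π := by rw [hxdef, hydef]; ring
  have hsum : 2*π ≤ x + y := by
    rw [hxy]
    have : (1:ℝ) ≤ (b:ℝ) - a := by
      have : a + 1 ≤ b := hab
      have : ((a:ℝ)) + 1 ≤ b := by exact_mod_cast this
      linarith
    nlinarith
  -- split the integral
  have hsplit : (∫ t in (-x)..y, sg t) = Si x + Si y := by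
    have h1 : (∫ t in (-x)..(0:ℝ), sg t) = Si x := by
      have h := integral_comp_neg (fun t => sg t) (a := 0) (b := x)
      simp_rw [sg_neg] at h
      rw [Si, h, neg_zero]
    have h2 := integral_add_adjacent_intervals (sg_intble (-x) 0) (sg_intble 0 y)
    rw [← h2, h1]
    rfl
  rw [hsplit]
  obtain ⟨hx1, hx2, hx3⟩ := Si_arch_bounds x hx0
  obtain ⟨hy1, hy2, hy3⟩ := Si_arch_bounds y hy0
  constructor
  · -- lower bound: one of x, y is ≥ π
    rcases le_or_gt π x with h|h
    · have := hx3 h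
      linarith [S2_ge]
    · have hyπ : π ≤ y := by linarith
      have := hy3 hyπ
      linarith [S2_ge]
  · linarith [S1_le_two]
end

section
/- Let n ≥ 1 and let I = [aπ/n, bπ/n] with integers a < b. If θ₀ ∉ I, then −1 ≤ ∫_I sin(2n(θ−θ₀))/(θ−θ₀) dθ ≤ 2. -/
open Real intervalIntegral MeasureTheory Set

lemma sinc_abs_le (x : ℝ) : |Real.sin x / x| ≤ 1 := by
  rcases eq_or_ne x 0 with h | h
  · simp [h]
  · rw [abs_div, div_le_one (abs_pos.mpr h)]
    exact Real.abs_sin_le_abs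

lemma sinc_intable (a b : ℝ) : IntervalIntegrable (fun x => Real.sin x / x) volume a b := by
  rw [intervalIntegrable_iff]
  haveI : IsFiniteMeasure (volume.restrict (Set.uIoc a b)) :=
    ⟨by rw [Measure.restrict_apply_univ]; exact measure_Ioc_lt_top⟩
  apply (integrable_const (1:ℝ)).mono'
  · exact (Real.measurable_sin.div measurable_id).aestronglyMeasurable
  · exact Filter.Eventually.of_forall fun x => sinc_abs_le x

lemma sinc_ibp (a b : ℝ) (ha : 0 < a) (hab : a ≤ b) :
    ∫ x in a..b, Real.sin x / x
      = Real.cos a / a - Real.cos b / b - ∫ x in a..b, Real.cos x / x ^ 2 := by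
  have hIcc : Set.uIcc a b = Set.Icc a b := Set.uIcc_of_le hab
  have hpos : ∀ x ∈ Set.uIcc a b, 0 < x := by
    intro x hx; rw [hIcc] at hx; exact lt_of_lt_of_le ha hx.1
  have h := intervalIntegral.integral_mul_deriv_eq_deriv_mul_of_hasDerivAt
    (a := a) (b := b)
    (u := fun x => x⁻¹) (v := fun x => -Real.cos x)
    (u' := fun x => -(x ^ 2)⁻¹) (v' := Real.sin)
    (continuousOn_inv₀.mono (fun x hx => (hpos x hx).ne'))
    (Real.continuous_cos.neg.continuousOn)
    (fun x hx => hasDerivAt_inv (by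
      have := hx.1; rw [min_eq_left hab] at this; exact (ha.trans this).ne'))
    (fun x hx => by have := (Real.hasDerivAt_cos x).neg; rw [neg_neg] at this; exact this)
    (ContinuousOn.intervalIntegrable
      (((continuous_pow 2).continuousOn.inv₀
        (fun x hx => pow_ne_zero 2 (hpos x hx).ne')).neg))
    (Real.continuous_sin.intervalIntegrable a b)
  have e1 : (∫ x in a..b, Real.sin x / x) = ∫ x in a..b, x⁻¹ * Real.sin x := by
    congr 1; ext x; rw [div_eq_inv_mul]
  have e2 : (∫ x in a..b, Real.cos x / x ^ 2) = ∫ x in a..b, -(x ^ 2)⁻¹ * -Real.cos x := by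
    congr 1; ext x; rw [neg_mul_neg, div_eq_inv_mul]
  rw [e1, e2, h, div_eq_inv_mul, div_eq_inv_mul]; ring

lemma int_inv_sq (a b : ℝ) (ha : 0 < a) (hab : a ≤ b) :
    ∫ x in a..b, ((x : ℝ) ^ 2)⁻¹ = 1 / a - 1 / b := by
  have h0 : (0 : ℝ) ∉ Set.uIcc a b := by
    rw [Set.uIcc_of_le hab]; intro h; exact absurd h.1 (not_le.mpr ha)
  have h := integral_zpow (a := a) (b := b) (n := -2) (Or.inr ⟨by norm_num, h0⟩)
  have e : ∀ x : ℝ, x ^ (-2 : ℤ) = (x ^ 2)⁻¹ := fun x => by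
    rw [zpow_neg]; norm_num
  simp_rw [e] at h
  rw [h]
  have hb : 0 < b := lt_of_lt_of_le ha hab
  norm_num
  field_simp
  ring

lemma cos_sq_bound (a b : ℝ) (ha : 0 < a) (hab : a ≤ b) :
    |∫ x in a..b, Real.cos x / x ^ 2| ≤ 1 / a - 1 / b := by
  have hi2 : IntervalIntegrable (fun x => ((x:ℝ) ^ 2)⁻¹) volume a b := by
    apply ContinuousOn.intervalIntegrable
    exact (continuous_pow 2).continuousOn.inv₀ (fun x hx => by
      rw [Set.uIcc_of_le hab] at hx
      exact pow_ne_zero 2 (lt_of_lt_of_le ha hx.1).ne')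
  have hi1 : IntervalIntegrable (fun x => Real.cos x / x ^ 2) volume a b := by
    apply ContinuousOn.intervalIntegrable
    exact Real.continuous_cos.continuousOn.div ((continuous_pow 2).continuousOn)
      (fun x hx => by
        rw [Set.uIcc_of_le hab] at hx
        exact pow_ne_zero 2 (lt_of_lt_of_le ha hx.1).ne')
  rw [← int_inv_sq a b ha hab, abs_le]
  constructor
  · rw [← intervalIntegral.integral_neg]
    apply intervalIntegral.integral_mono_on hab hi2.neg hi1
    intro x hx
    have hx2 : (0:ℝ) < x ^ 2 := pow_pos (lt_of_lt_of_le ha hx.1) 2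
    show -(x ^ 2)⁻¹ ≤ Real.cos x / x ^ 2
    rw [neg_le, ← neg_div, div_le_iff₀ hx2, inv_mul_cancel₀ hx2.ne']
    linarith [Real.neg_one_le_cos x]
  · apply intervalIntegral.integral_mono_on hab hi1 hi2
    intro x hx
    have hx2 : (0:ℝ) < x ^ 2 := pow_pos (lt_of_lt_of_le ha hx.1) 2
    rw [div_le_iff₀ hx2, inv_mul_cancel₀ hx2.ne']
    exact Real.cos_le_one x

lemma sinc_far (a b : ℝ) (ha : Real.pi ≤ a) (hab : a ≤ b) :
    -(2 / Real.pi) ≤ (∫ x in a..b, Real.sin x / x) ∧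
      (∫ x in a..b, Real.sin x / x) ≤ 2 / Real.pi := by
  have hπ := Real.pi_pos
  have ha0 : 0 < a := lt_of_lt_of_le hπ ha
  have hb0 : 0 < b := lt_of_lt_of_le ha0 hab
  have h := sinc_ibp a b ha0 hab
  have hc := abs_le.mp (cos_sq_bound a b ha0 hab)
  have h1 : Real.cos a / a ≤ 1 / a := by gcongr; exact Real.cos_le_one a
  have h2 : -(1 / a) ≤ Real.cos a / a := by
    rw [neg_div' a 1]; gcongr; exact Real.neg_one_le_cos a
  have h3 : Real.cos b / b ≤ 1 / b := by gcongr; exact Real.cos_le_one b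
  have h4 : -(1 / b) ≤ Real.cos b / b := by
    rw [neg_div' b 1]; gcongr; exact Real.neg_one_le_cos b
  have h5 : 1 / a ≤ 1 / Real.pi := by gcongr
  have e : 2 / Real.pi = 1 / Real.pi + 1 / Real.pi := by ring
  constructor <;> (rw [h]; linarith)

lemma sinc_pi_tail (b : ℝ) (hb : Real.pi ≤ b) :
    -(2 / Real.pi) ≤ (∫ x in Real.pi..b, Real.sin x / x) ∧
      (∫ x in Real.pi..b, Real.sin x / x) ≤ 0 := by
  have hπ := Real.pi_pos
  have hb0 : 0 < b := lt_of_lt_of_le hπ hb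
  have h := sinc_ibp Real.pi b hπ hb
  have hc := abs_le.mp (cos_sq_bound Real.pi b hπ hb)
  have h3 : Real.cos b / b ≤ 1 / b := by gcongr; exact Real.cos_le_one b
  have h4 : -(1 / b) ≤ Real.cos b / b := by
    rw [neg_div' b 1]; gcongr; exact Real.neg_one_le_cos b
  rw [Real.cos_pi] at h
  have e : 2 / Real.pi = 1 / Real.pi + 1 / Real.pi := by ring
  have e2 : (-1 : ℝ) / Real.pi = -(1 / Real.pi) := by ring
  constructor <;> (rw [h]; linarith)

lemma sinc_head (a b : ℝ) (h0 : 0 ≤ a) (hab : a ≤ b) (hb : b ≤ Real.pi) :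
    0 ≤ (∫ x in a..b, Real.sin x / x) ∧ (∫ x in a..b, Real.sin x / x) ≤ 2 := by
  have hπ := Real.pi_pos
  constructor
  · apply intervalIntegral.integral_nonneg hab
    intro x hx
    exact div_nonneg (Real.sin_nonneg_of_nonneg_of_le_pi (h0.trans hx.1) (hx.2.trans hb))
      (h0.trans hx.1)
  · have hcos : ∀ x ∈ Set.Icc a b, Real.sin x / x ≤ Real.cos (x / 2) := by
      intro x hx
      have hx0 : 0 ≤ x := h0.trans hx.1
      have hxπ : x ≤ Real.pi := hx.2.trans hb
      rcases eq_or_lt_of_le hx0 with h | h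
      · rw [← h]; norm_num
      · have hs : Real.sin x = 2 * Real.sin (x / 2) * Real.cos (x / 2) := by
          rw [← Real.sin_two_mul]; congr 1; ring
        have hsle : Real.sin (x / 2) ≤ x / 2 := Real.sin_le (by linarith)
        have hcn : 0 ≤ Real.cos (x / 2) :=
          Real.cos_nonneg_of_mem_Icc ⟨by linarith, by linarith⟩
        rw [div_le_iff₀ h, hs]
        nlinarith
    have hF : ∀ x ∈ Set.uIcc a b, HasDerivAt (fun y => 2 * Real.sin (y / 2))
        (Real.cos (x / 2)) x := by
      intro x _
      have := ((Real.hasDerivAt_sin (x / 2)).comp x ((hasDerivAt_id x).div_const 2)).const_mul 2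
      simpa using this.congr_deriv (by ring)
    have hint : (∫ x in a..b, Real.cos (x / 2))
        = 2 * Real.sin (b / 2) - 2 * Real.sin (a / 2) := by
      apply intervalIntegral.integral_eq_sub_of_hasDerivAt hF
      exact (Real.continuous_cos.comp (continuous_id.div_const 2)).intervalIntegrable a b
    have hmono : (∫ x in a..b, Real.sin x / x) ≤ ∫ x in a..b, Real.cos (x / 2) := by
      apply intervalIntegral.integral_mono_on hab (sinc_intable a b)
        ((Real.continuous_cos.comp (continuous_id.div_const 2)).intervalIntegrable a b) hcos
    have hs1 : Real.sin (b / 2) ≤ 1 := Real.sin_le_one _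
    have hs2 : 0 ≤ Real.sin (a / 2) :=
      Real.sin_nonneg_of_nonneg_of_le_pi (by linarith) (by linarith)
    linarith [hmono, hint.le, hint.ge]

lemma sinc_key (a b : ℝ) (h0 : 0 ≤ a) (hab : a ≤ b) :
    (-1 : ℝ) ≤ (∫ x in a..b, Real.sin x / x) ∧ (∫ x in a..b, Real.sin x / x) ≤ 2 := by
  have hπ2 : (2 : ℝ) ≤ Real.pi := Real.two_le_pi
  have hπ := Real.pi_pos
  have h2π : 2 / Real.pi ≤ 1 := by rw [div_le_one hπ]; linarith
  rcases le_or_gt b Real.pi with hbπ | hπb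
  · obtain ⟨l, u⟩ := sinc_head a b h0 hab hbπ
    exact ⟨by linarith, u⟩
  · rcases le_or_gt Real.pi a with hπa | haπ
    · obtain ⟨l, u⟩ := sinc_far a b hπa hab
      exact ⟨by linarith, by linarith⟩
    · have hsplit : (∫ x in a..b, Real.sin x / x)
          = (∫ x in a..Real.pi, Real.sin x / x) + ∫ x in Real.pi..b, Real.sin x / x :=
        (intervalIntegral.integral_add_adjacent_intervals (sinc_intable a Real.pi)
          (sinc_intable Real.pi b)).symm
      obtain ⟨l1, u1⟩ := sinc_head a Real.pi h0 haπ.le le_rfl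
      obtain ⟨l2, u2⟩ := sinc_pi_tail b hπb.le
      rw [hsplit]
      exact ⟨by linarith, by linarith⟩

lemma sinc_key' (a b : ℝ) (hab : a ≤ b) (h : b ≤ 0 ∨ 0 ≤ a) :
    (-1 : ℝ) ≤ (∫ x in a..b, Real.sin x / x) ∧ (∫ x in a..b, Real.sin x / x) ≤ 2 := by
  rcases h with h | h
  · have e : (∫ x in a..b, Real.sin x / x) = ∫ x in -b..(-a), Real.sin x / x := by
      rw [← intervalIntegral.integral_comp_neg (fun x => Real.sin x / x)]
      congr 1; ext x; rw [Real.sin_neg, neg_div_neg_eq]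
    rw [e]
    exact sinc_key (-b) (-a) (by linarith) (by linarith)
  · exact sinc_key a b h hab

theorem sine_integral_out (n : ℕ) (hn : 1 ≤ n) (a b : ℤ) (hab : a < b) (θ₀ : ℝ)
    (hθ₀ : θ₀ ∉ Set.Icc (a * Real.pi / n) (b * Real.pi / n)) :
    (-1 : ℝ) ≤ (∫ θ in (a * Real.pi / n)..(b * Real.pi / n),
        Real.sin (2 * n * (θ - θ₀)) / (θ - θ₀)) ∧
    (∫ θ in (a * Real.pi / n)..(b * Real.pi / n),
        Real.sin (2 * n * (θ - θ₀)) / (θ - θ₀)) ≤ 2 := by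
  have hπ := Real.pi_pos
  have hn0 : (0 : ℝ) < n := by exact_mod_cast hn
  set A : ℝ := a * Real.pi / n with hA
  set B : ℝ := b * Real.pi / n with hB
  have hAB : A ≤ B := by
    rw [hA, hB]
    have : (a : ℝ) ≤ (b : ℝ) := by exact_mod_cast hab.le
    gcongr
  set c : ℝ := 2 * n with hc
  have hc0 : 0 < c := by positivity
  -- change of variables
  have step1 : (∫ θ in A..B, Real.sin (c * (θ - θ₀)) / (θ - θ₀))
      = ∫ u in (A - θ₀)..(B - θ₀), Real.sin (c * u) / u :=
    (intervalIntegral.integral_comp_sub_right (fun u => Real.sin (c * u) / u) θ₀)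
  have step2 : (∫ u in (A - θ₀)..(B - θ₀), Real.sin (c * u) / u)
      = ∫ x in (c * (A - θ₀))..(c * (B - θ₀)), Real.sin x / x := by
    rw [← intervalIntegral.smul_integral_comp_mul_left (fun x => Real.sin x / x) c]
    rw [smul_eq_mul, ← intervalIntegral.integral_const_mul]
    congr 1; ext u
    rcases eq_or_ne u 0 with h | h
    · simp [h]
    · field_simp
  rw [step1, step2]
  -- θ₀ outside the interval
  rw [Set.mem_Icc, not_and_or, not_le, not_le] at hθ₀
  apply sinc_key' _ _ (by nlinarith)
  rcases hθ₀ with h | h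
  · right; nlinarith
  · left; nlinarith
end

section
/- Let t be an odd nonnegative integer, set T = 2^{t+10}, and define H(x) = e^{ix}·2^{−(t+1)/2}·P_t(e^{ix/T}) + e^{2ix}·2^{−(t+1)/2}·Q_t(e^{ix/T}), where P_t, Q_t are the Rudin–Shapiro polynomials. Then Re(H(0)) = 1 and Re(H(Tπ)) = 1; moreover, if |x| ≤ 1/8 or |x − Tπ| ≤ 1/8, then Re(H(x)) ≥ 1/2. -/
open Complex

noncomputable def Complex.abs : AbsoluteValue ℂ ℝ where
  toFun z := ‖z‖
  map_mul' := norm_mul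
  nonneg' := norm_nonneg
  eq_zero' _ := norm_eq_zero
  add_le' := norm_add_le

theorem Complex.norm_eq_abs (z : ℂ) : ‖z‖ = Complex.abs z := rfl

theorem Complex.abs_two : Complex.abs 2 = 2 := by
  show ‖(2:ℂ)‖ = 2; simp

theorem Complex.abs_exp (z : ℂ) : Complex.abs (Complex.exp z) = Real.exp z.re :=
  Complex.norm_exp z

theorem Complex.sq_abs (z : ℂ) : Complex.abs z ^ 2 = Complex.normSq z := Complex.sq_norm z

theorem Complex.abs_re_le_abs (z : ℂ) : |z.re| ≤ Complex.abs z := Complex.abs_re_le_norm z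

lemma expI_sub_one (c : ℝ) : Complex.abs (Complex.exp (Complex.I * c) - 1) ≤ |c| := by
  have hre : (Complex.exp (Complex.I * c) - 1).re = Real.cos c - 1 := by
    simp [Complex.exp_re]
  have him : (Complex.exp (Complex.I * c) - 1).im = Real.sin c := by
    simp [Complex.exp_im]
  have hsq : (Complex.abs (Complex.exp (Complex.I * c) - 1))^2
      = (Real.cos c - 1)^2 + (Real.sin c)^2 := by
    rw [Complex.sq_abs, Complex.normSq_apply, hre, him]; ring
  have h1 : Real.sin (c/2)^2 ≤ (c/2)^2 := Real.sin_sq_le_sq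
  have h2 : Real.sin (c/2)^2 + Real.cos (c/2)^2 = 1 := Real.sin_sq_add_cos_sq _
  have h3 : Real.cos (c/2)^2 = 1/2 + Real.cos c / 2 := by have := Real.cos_sq (c/2); rw [show 2*(c/2) = c by ring] at this; linarith
  have h4 : Real.sin c ^2 + Real.cos c ^2 = 1 := Real.sin_sq_add_cos_sq _
  nlinarith [Complex.abs.nonneg (Complex.exp (Complex.I * c) - 1), abs_nonneg c, _root_.sq_abs c]

lemma expI_lip (a b : ℝ) :
    Complex.abs (Complex.exp (Complex.I * a) - Complex.exp (Complex.I * b)) ≤ |a - b| := by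
  have h : Complex.exp (Complex.I * a) - Complex.exp (Complex.I * b)
      = Complex.exp (Complex.I * b) * (Complex.exp (Complex.I * ((a - b : ℝ) : ℂ)) - 1) := by
    rw [mul_sub, ← Complex.exp_add]; push_cast; ring_nf
  rw [h, map_mul]
  have habs : Complex.abs (Complex.exp (Complex.I * b)) = 1 := by
    simp [Complex.abs_exp]
  rw [habs, one_mul]
  exact expI_sub_one (a - b)

noncomputable def RS : ℕ → (ℂ → ℂ) × (ℂ → ℂ)
  | 0 => (fun _ => 1, fun _ => 1)
  | t + 1 => (fun z => (RS t).1 z + z ^ (2 ^ t) * (RS t).2 z,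
              fun z => (RS t).1 z - z ^ (2 ^ t) * (RS t).2 z)

lemma RS_sq_bound (t : ℕ) (z : ℂ) (hz : Complex.abs z = 1) :
    (Complex.abs ((RS t).1 z))^2 + (Complex.abs ((RS t).2 z))^2 = 2^(t+1) := by
  induction t with
  | zero => norm_num [RS]
  | succ t ih =>
    have key : ∀ w : ℂ, Complex.abs (z ^ (2^t) * w) = Complex.abs w := by
      intro w; rw [map_mul, map_pow, hz, one_pow, one_mul]
    show (Complex.abs ((RS t).1 z + z^(2^t) * (RS t).2 z))^2
        + (Complex.abs ((RS t).1 z - z^(2^t) * (RS t).2 z))^2 = _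
    rw [← Complex.norm_eq_abs, ← Complex.norm_eq_abs]
    have hp := parallelogram_law_with_norm ℝ ((RS t).1 z) (z^(2^t) * (RS t).2 z)
    have h1 : ‖z^(2^t) * (RS t).2 z‖ = Complex.abs ((RS t).2 z) := by
      rw [Complex.norm_eq_abs]; exact key _
    have e : (2:ℝ)^(t+1+1) = 2 * 2^(t+1) := by ring
    rw [hp, h1, Complex.norm_eq_abs, e, ← ih]

lemma RS_abs_le (t : ℕ) (z : ℂ) (hz : Complex.abs z = 1) :
    Complex.abs ((RS t).1 z) ≤ 2^(t/2+1) ∧ Complex.abs ((RS t).2 z) ≤ 2^(t/2+1) := by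
  have h := RS_sq_bound t z hz
  have h2 : (2:ℝ)^(t+1) ≤ ((2:ℝ)^(t/2+1))^2 := by
    rw [← pow_mul]
    apply pow_le_pow_right₀ (by norm_num)
    omega
  have hM : (0:ℝ) < 2^(t/2+1) := by positivity
  constructor <;>
    nlinarith [Complex.abs.nonneg ((RS t).1 z), Complex.abs.nonneg ((RS t).2 z),
      sq_nonneg (Complex.abs ((RS t).1 z)), sq_nonneg (Complex.abs ((RS t).2 z))]

lemma abs_sub_le'' (X Y : ℂ) : Complex.abs (X - Y) ≤ Complex.abs X + Complex.abs Y := by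
  simpa [sub_eq_add_neg] using Complex.abs.add_le X (-Y)

lemma RS_lip (t : ℕ) (a b : ℝ) :
    Complex.abs ((RS t).1 (Complex.exp (Complex.I * a)) - (RS t).1 (Complex.exp (Complex.I * b)))
      ≤ (2 + ((t % 2 : ℕ) : ℝ)) * 2^(t + t/2) * |a - b| ∧
    Complex.abs ((RS t).2 (Complex.exp (Complex.I * a)) - (RS t).2 (Complex.exp (Complex.I * b)))
      ≤ (2 + ((t % 2 : ℕ) : ℝ)) * 2^(t + t/2) * |a - b| := by
  induction t with
  | zero =>
    constructor <;> simp [RS]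
  | succ t ih =>
    set ea := Complex.exp (Complex.I * a) with hea_def
    set eb := Complex.exp (Complex.I * b) with heb_def
    have hea : Complex.abs ea = 1 := by simp [hea_def, Complex.abs_exp]
    have heb : Complex.abs eb = 1 := by simp [heb_def, Complex.abs_exp]
    have hpow : ∀ x : ℝ, Complex.exp (Complex.I * x) ^ (2^t)
        = Complex.exp (Complex.I * ((2^t * x : ℝ) : ℂ)) := by
      intro x
      rw [← Complex.exp_nat_mul]
      congr 1
      push_cast
      ring
    have hlip2 : Complex.abs (ea ^ (2^t) - eb ^ (2^t)) ≤ 2^t * |a - b| := by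
      rw [hea_def, heb_def, hpow a, hpow b]
      have h := expI_lip ((2:ℝ)^t * a) ((2:ℝ)^t * b)
      have e : |(2:ℝ)^t * a - 2^t * b| = 2^t * |a-b| := by
        rw [← mul_sub, _root_.abs_mul, _root_.abs_of_nonneg (by positivity : (0:ℝ) ≤ (2:ℝ)^t)]
      push_cast at h ⊢
      rw [e] at h
      exact h
    have hQb : Complex.abs ((RS t).2 eb) ≤ 2^(t/2+1) := (RS_abs_le t eb heb).2
    have key : Complex.abs (ea^(2^t) * (RS t).2 ea - eb^(2^t) * (RS t).2 eb)
        ≤ Complex.abs ((RS t).2 ea - (RS t).2 eb) + 2^(t/2+1) * (2^t * |a - b|) := by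
      have decomp : ea^(2^t) * (RS t).2 ea - eb^(2^t) * (RS t).2 eb
          = ea^(2^t) * ((RS t).2 ea - (RS t).2 eb) + (ea^(2^t) - eb^(2^t)) * (RS t).2 eb := by
        ring
      rw [decomp]
      refine (Complex.abs.add_le _ _).trans ?_
      rw [map_mul, map_mul, map_pow, hea, one_pow, one_mul]
      have h2 : Complex.abs (ea^(2^t) - eb^(2^t)) * Complex.abs ((RS t).2 eb)
          ≤ (2^t * |a-b|) * 2^(t/2+1) :=
        mul_le_mul hlip2 hQb (Complex.abs.nonneg _) (by positivity)
      linarith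
    have hnum : 2 * ((2 + ((t % 2 : ℕ) : ℝ)) * 2^(t + t/2)) + 2^(t/2+1) * 2^t
        ≤ (2 + (((t+1) % 2 : ℕ) : ℝ)) * 2^((t+1) + (t+1)/2) := by
      rcases Nat.even_or_odd t with ⟨m, hm⟩ | ⟨m, hm⟩ <;> subst hm
      · have e1 : (m+m) + (m+m)/2 = 3*m := by omega
        have e2 : (m+m)/2 + 1 = m+1 := by omega
        have e3 : (m+m+1) + (m+m+1)/2 = 3*m+1 := by omega
        have e4 : (m+m) % 2 = 0 := by omega
        have e5 : (m+m+1) % 2 = 1 := by omega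
        have e6 : (2:ℝ)^(m+1) * 2^(m+m) = 2^(3*m+1) := by
          rw [← pow_add]; congr 1; omega
        rw [e1, e2, e3, e4, e5, e6, pow_succ]
        norm_num
        nlinarith [pow_pos (by norm_num : (0:ℝ) < 2) (3*m)]
      · have e1 : (2*m+1) + (2*m+1)/2 = 3*m+1 := by omega
        have e2 : (2*m+1)/2 + 1 = m+1 := by omega
        have e3 : (2*m+1+1) + (2*m+1+1)/2 = 3*m+3 := by omega
        have e4 : (2*m+1) % 2 = 1 := by omega
        have e5 : (2*m+1+1) % 2 = 0 := by omega
        have e6 : (2:ℝ)^(m+1) * 2^(2*m+1) = 2^(3*m+2) := by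
          rw [← pow_add]; congr 1; omega
        have e7 : (2:ℝ)^(3*m+2) = 2 * 2^(3*m+1) := by
          rw [pow_succ]; ring
        have e8 : (2:ℝ)^(3*m+3) = 4 * 2^(3*m+1) := by
          rw [show 3*m+3 = (3*m+1)+2 by omega, pow_add]; ring
        rw [e1, e2, e3, e4, e5, e6, e7, e8]
        norm_num
        nlinarith [pow_pos (by norm_num : (0:ℝ) < 2) (3*m+1)]
    have habab : (0:ℝ) ≤ |a - b| := abs_nonneg _
    constructor
    · show Complex.abs (((RS t).1 ea + ea^(2^t) * (RS t).2 ea)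
          - ((RS t).1 eb + eb^(2^t) * (RS t).2 eb)) ≤ _
      have decomp : ((RS t).1 ea + ea^(2^t) * (RS t).2 ea)
            - ((RS t).1 eb + eb^(2^t) * (RS t).2 eb)
          = ((RS t).1 ea - (RS t).1 eb)
            + (ea^(2^t) * (RS t).2 ea - eb^(2^t) * (RS t).2 eb) := by ring
      rw [decomp]
      refine (Complex.abs.add_le _ _).trans ?_
      have h1 := ih.1
      have h2 := ih.2
      nlinarith [key, hnum, mul_le_mul_of_nonneg_right hnum habab]
    · show Complex.abs (((RS t).1 ea - ea^(2^t) * (RS t).2 ea)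
          - ((RS t).1 eb - eb^(2^t) * (RS t).2 eb)) ≤ _
      have decomp : ((RS t).1 ea - ea^(2^t) * (RS t).2 ea)
            - ((RS t).1 eb - eb^(2^t) * (RS t).2 eb)
          = ((RS t).1 ea - (RS t).1 eb)
            - (ea^(2^t) * (RS t).2 ea - eb^(2^t) * (RS t).2 eb) := by ring
      rw [decomp]
      refine (abs_sub_le'' _ _).trans ?_
      have h1 := ih.1
      have h2 := ih.2
      nlinarith [key, hnum, mul_le_mul_of_nonneg_right hnum habab]

lemma RS_special (s : ℕ) : (RS (2*s+1)).1 1 = 2^(s+1) ∧ (RS (2*s+1)).2 1 = 0 ∧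
    (RS (2*s+1)).1 (-1) = 0 ∧ (RS (2*s+1)).2 (-1) = 2^(s+1) := by
  induction s with
  | zero => norm_num [RS]
  | succ s ih =>
    obtain ⟨h1, h2, h3, h4⟩ := ih
    have e : 2*(s+1)+1 = (2*s+1) + 1 + 1 := by ring
    rw [e]
    have hev : ∀ k : ℕ, (-1:ℂ)^(2^(k+1)) = 1 := fun k =>
      Even.neg_one_pow ⟨2^k, by rw [pow_succ]; ring⟩
    have hev1 : (-1:ℂ)^(2^(2*s+1)) = 1 := hev (2*s)
    have hev2 : (-1:ℂ)^(2^(2*s+1+1)) = 1 := hev (2*s+1)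
    have u1 : ∀ z : ℂ, (RS (2*s+1+1+1)).1 z
        = ((RS (2*s+1)).1 z + z^(2^(2*s+1)) * (RS (2*s+1)).2 z)
          + z^(2^(2*s+1+1)) * ((RS (2*s+1)).1 z - z^(2^(2*s+1)) * (RS (2*s+1)).2 z) :=
      fun z => rfl
    have u2 : ∀ z : ℂ, (RS (2*s+1+1+1)).2 z
        = ((RS (2*s+1)).1 z + z^(2^(2*s+1)) * (RS (2*s+1)).2 z)
          - z^(2^(2*s+1+1)) * ((RS (2*s+1)).1 z - z^(2^(2*s+1)) * (RS (2*s+1)).2 z) :=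
      fun z => rfl
    refine ⟨?_, ?_, ?_, ?_⟩
    · rw [u1, one_pow, one_pow, h1, h2]; ring
    · rw [u2, one_pow, one_pow, h1, h2]; ring
    · rw [u1, hev1, hev2, h3, h4]; ring
    · rw [u2, hev1, hev2, h3, h4]; ring

theorem H_large_near_special_points (t : ℕ) (ht : Odd t) (T : ℕ) (hT : T = 2 ^ (t + 10))
    (H : ℝ → ℂ)
    (hH : H = fun x : ℝ =>
      Complex.exp (Complex.I * x) * ((2 : ℂ) ^ (((t : ℂ) + 1) / 2))⁻¹
          * (RS t).1 (Complex.exp (Complex.I * (x / T)))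
        + Complex.exp (2 * Complex.I * x) * ((2 : ℂ) ^ (((t : ℂ) + 1) / 2))⁻¹
          * (RS t).2 (Complex.exp (Complex.I * (x / T)))) :
    (H 0).re = 1 ∧ (H (T * Real.pi)).re = 1 ∧
      ∀ x : ℝ, (|x| ≤ 1 / 8 ∨ |x - T * Real.pi| ≤ 1 / 8) → (H x).re ≥ 1 / 2 := by
  obtain ⟨s, hs⟩ := ht
  set c : ℂ := ((2 : ℂ) ^ (((t : ℂ) + 1) / 2))⁻¹ with hc
  have hcpow : ((2:ℂ) ^ (((t : ℂ) + 1) / 2)) = 2^(s+1) := by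
    have e : ((t : ℂ) + 1) / 2 = ((s+1 : ℕ) : ℂ) := by
      rw [hs]; push_cast; ring
    rw [e, Complex.cpow_natCast]
  have hcval : c = ((2:ℂ)^(s+1))⁻¹ := by rw [hc, hcpow]
  have habsc : Complex.abs c = ((2:ℝ)^(s+1))⁻¹ := by
    rw [hcval, map_inv₀, map_pow, Complex.abs_two]
  have hc2 : c * 2^(s+1) = 1 := by
    rw [hcval]
    exact inv_mul_cancel₀ (pow_ne_zero _ two_ne_zero)
  have hT0 : (0:ℝ) < (T:ℝ) := by
    rw [hT]; positivity
  have hHx : ∀ x : ℝ, H x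
      = Complex.exp (Complex.I * x) * c * (RS t).1 (Complex.exp (Complex.I * ((x / T : ℝ) : ℂ)))
        + Complex.exp (2 * (Complex.I * x)) * c
          * (RS t).2 (Complex.exp (Complex.I * ((x / T : ℝ) : ℂ))) := by
    intro x
    rw [hH]
    push_cast
    ring_nf
  have habs_exp : ∀ z : ℝ, Complex.abs (Complex.exp (Complex.I * z)) = 1 := by
    intro z; simp [Complex.abs_exp]
  have hm2 : t % 2 = 1 := by omega
  have hdiv : t + t / 2 = 3*s+1 := by omega
  have hdiv2 : t / 2 + 1 = s + 1 := by omega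
  have hTval : (T:ℝ) = 2^(2*s+11) := by
    rw [hT, hs]
    push_cast
    norm_num
  have hsup : ((2:ℝ)^(s+1))⁻¹ * 2^(t/2+1) = 1 := by
    rw [hdiv2]
    exact inv_mul_cancel₀ (by positivity)
  have hlipnum : ∀ u : ℝ, ((2:ℝ)^(s+1))⁻¹ * ((2 + ((t % 2 : ℕ) : ℝ)) * 2^(t + t/2) * (u / T)) = 3/2048 * u := by
    intro u
    rw [hm2, hdiv, hTval]
    have hpow : (2:ℝ)^(s+1) * 2^(2*s+11) = 2^(3*s+1) * 2048 := by
      rw [← pow_add, show (2048:ℝ) = 2^11 by norm_num, ← pow_add]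
      congr 1
      omega
    push_cast
    field_simp
    linear_combination (3 * u) * hpow
  have hlip : ∀ x y : ℝ, Complex.abs (H x - H y) ≤ 4 * |x - y| := by
    intro x y
    rw [hHx x, hHx y]
    set a := x / (T:ℝ) with ha
    set b := y / (T:ℝ) with hb
    set ea := Complex.exp (Complex.I * ((a : ℝ) : ℂ)) with hea_def
    set eb := Complex.exp (Complex.I * ((b : ℝ) : ℂ)) with heb_def
    have hab : |a - b| = |x - y| / T := by
      rw [ha, hb, div_sub_div_same, abs_div, abs_of_pos hT0]
    have heb1 : Complex.abs eb = 1 := habs_exp b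
    have hPlip := (RS_lip t a b).1
    have hQlip := (RS_lip t a b).2
    have hPb := (RS_abs_le t eb heb1).1
    have hQb := (RS_abs_le t eb heb1).2
    have he1 : Complex.abs (Complex.exp (Complex.I * (x:ℂ)) - Complex.exp (Complex.I * (y:ℂ))) ≤ |x - y| :=
      expI_lip x y
    have he2 : Complex.abs (Complex.exp (2 * (Complex.I * (x:ℂ))) - Complex.exp (2 * (Complex.I * (y:ℂ)))) ≤ 2 * |x - y| := by
      have e : ∀ u : ℝ, 2 * (Complex.I * (u:ℂ)) = Complex.I * ((2*u : ℝ) : ℂ) := by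
        intro u; push_cast; ring
      rw [e x, e y]
      have h := expI_lip (2*x) (2*y)
      calc Complex.abs _ ≤ |2*x - 2*y| := h
        _ = 2 * |x - y| := by rw [show 2*x - 2*y = 2*(x-y) by ring, abs_mul]; norm_num
    have decomp : (Complex.exp (Complex.I * (x:ℂ)) * c * (RS t).1 ea
          + Complex.exp (2 * (Complex.I * (x:ℂ))) * c * (RS t).2 ea)
        - (Complex.exp (Complex.I * (y:ℂ)) * c * (RS t).1 eb
          + Complex.exp (2 * (Complex.I * (y:ℂ))) * c * (RS t).2 eb)
      = Complex.exp (Complex.I * (x:ℂ)) * c * ((RS t).1 ea - (RS t).1 eb)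
        + (Complex.exp (Complex.I * (x:ℂ)) - Complex.exp (Complex.I * (y:ℂ))) * c * (RS t).1 eb
        + Complex.exp (2 * (Complex.I * (x:ℂ))) * c * ((RS t).2 ea - (RS t).2 eb)
        + (Complex.exp (2 * (Complex.I * (x:ℂ))) - Complex.exp (2 * (Complex.I * (y:ℂ)))) * c * (RS t).2 eb := by
      ring
    rw [decomp]
    have tri : ∀ A B C D : ℂ, Complex.abs (A + B + C + D)
        ≤ Complex.abs A + Complex.abs B + Complex.abs C + Complex.abs D := by
      intro A B C D
      calc Complex.abs (A + B + C + D) ≤ Complex.abs (A + B + C) + Complex.abs D :=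
            Complex.abs.add_le _ _
        _ ≤ (Complex.abs (A + B) + Complex.abs C) + Complex.abs D := by
            have := Complex.abs.add_le (A + B) C; linarith
        _ ≤ ((Complex.abs A + Complex.abs B) + Complex.abs C) + Complex.abs D := by
            have := Complex.abs.add_le A B; linarith
    refine (tri _ _ _ _).trans ?_
    have t1 : Complex.abs (Complex.exp (Complex.I * (x:ℂ)) * c * ((RS t).1 ea - (RS t).1 eb))
        ≤ 3/2048 * |x - y| := by
      rw [map_mul, map_mul, habs_exp x, one_mul, habsc, ← hlipnum |x - y|, ← hab]
      exact mul_le_mul_of_nonneg_left hPlip (by positivity)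
    have t3 : Complex.abs (Complex.exp (2 * (Complex.I * (x:ℂ))) * c * ((RS t).2 ea - (RS t).2 eb))
        ≤ 3/2048 * |x - y| := by
      have habs2 : Complex.abs (Complex.exp (2 * (Complex.I * (x:ℂ)))) = 1 := by
        have e : 2 * (Complex.I * (x:ℂ)) = Complex.I * ((2*x : ℝ) : ℂ) := by push_cast; ring
        rw [e]; exact habs_exp (2*x)
      rw [map_mul, map_mul, habs2, one_mul, habsc, ← hlipnum |x - y|, ← hab]
      exact mul_le_mul_of_nonneg_left hQlip (by positivity)
    have t2 : Complex.abs ((Complex.exp (Complex.I * (x:ℂ)) - Complex.exp (Complex.I * (y:ℂ))) * c * (RS t).1 eb)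
        ≤ |x - y| := by
      rw [map_mul, map_mul, habsc]
      calc Complex.abs (Complex.exp (Complex.I * (x:ℂ)) - Complex.exp (Complex.I * (y:ℂ)))
            * ((2:ℝ)^(s+1))⁻¹ * Complex.abs ((RS t).1 eb)
          ≤ |x - y| * ((2:ℝ)^(s+1))⁻¹ * 2^(t/2+1) := by
            have h1 : (0:ℝ) ≤ ((2:ℝ)^(s+1))⁻¹ := by positivity
            have := mul_le_mul (mul_le_mul_of_nonneg_right he1 h1) hPb
              (Complex.abs.nonneg _) (by positivity)
            linarith
        _ = |x - y| := by rw [mul_assoc, hsup, mul_one]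
    have t4 : Complex.abs ((Complex.exp (2 * (Complex.I * (x:ℂ))) - Complex.exp (2 * (Complex.I * (y:ℂ)))) * c * (RS t).2 eb)
        ≤ 2 * |x - y| := by
      rw [map_mul, map_mul, habsc]
      calc Complex.abs (Complex.exp (2 * (Complex.I * (x:ℂ))) - Complex.exp (2 * (Complex.I * (y:ℂ))))
            * ((2:ℝ)^(s+1))⁻¹ * Complex.abs ((RS t).2 eb)
          ≤ (2 * |x - y|) * ((2:ℝ)^(s+1))⁻¹ * 2^(t/2+1) := by
            have h1 : (0:ℝ) ≤ ((2:ℝ)^(s+1))⁻¹ := by positivity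
            have := mul_le_mul (mul_le_mul_of_nonneg_right he2 h1) hQb
              (Complex.abs.nonneg _) (by positivity)
            linarith
        _ = 2 * |x - y| := by rw [mul_assoc, hsup, mul_one]
    have hab0 : (0:ℝ) ≤ |x - y| := abs_nonneg _
    linarith
  have hH0 : H 0 = 1 := by
    rw [hHx 0]
    simp only [Complex.ofReal_zero, zero_div, mul_zero, Complex.exp_zero, one_mul, mul_one]
    rw [hs, (RS_special s).1, (RS_special s).2.1, mul_zero, add_zero, hc2]
  have hTeven : Even T := by
    rw [hT]
    exact ⟨2^(t+9), by rw [pow_succ]; ring⟩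
  have hHpi : H ((T:ℝ) * Real.pi) = 1 := by
    rw [hHx]
    have hr : ((T:ℝ) * Real.pi) / (T:ℝ) = Real.pi := mul_div_cancel_left₀ _ (ne_of_gt hT0)
    rw [hr]
    have h1 : Complex.exp (Complex.I * (((T:ℝ) * Real.pi : ℝ) : ℂ)) = 1 := by
      have e : Complex.I * (((T:ℝ) * Real.pi : ℝ) : ℂ) = (T:ℂ) * (Real.pi * Complex.I) := by
        push_cast; ring
      rw [e, Complex.exp_nat_mul, Complex.exp_pi_mul_I]
      exact hTeven.neg_one_pow
    have h2 : Complex.exp (2 * (Complex.I * (((T:ℝ) * Real.pi : ℝ) : ℂ))) = 1 := by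
      have e : 2 * (Complex.I * (((T:ℝ) * Real.pi : ℝ) : ℂ)) = (T:ℂ) * (2 * Real.pi * Complex.I) := by
        push_cast; ring
      rw [e, Complex.exp_nat_mul, Complex.exp_two_pi_mul_I, one_pow]
    have h3 : Complex.exp (Complex.I * ((Real.pi : ℝ) : ℂ)) = -1 := by
      rw [mul_comm, Complex.exp_pi_mul_I]
    rw [h1, h2, h3, hs, (RS_special s).2.2.1, (RS_special s).2.2.2]
    rw [mul_zero, zero_add, one_mul]
    exact hc2
  have key : ∀ x x0 : ℝ, H x0 = 1 → |x - x0| ≤ 1/8 → (H x).re ≥ 1/2 := by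
    intro x x0 h0 hx0
    have h1 := hlip x x0
    rw [h0] at h1
    have h2 : Complex.abs (H x - 1) ≤ 1/2 := h1.trans (by linarith)
    have h3 : |(H x - 1).re| ≤ Complex.abs (H x - 1) := Complex.abs_re_le_abs _
    have h4 : (H x - 1).re = (H x).re - 1 := by simp [Complex.sub_re]
    have h5 : |(H x).re - 1| ≤ 1/2 := by
      rw [← h4]; exact h3.trans h2
    linarith [(abs_le.mp h5).1]
  refine ⟨by rw [hH0]; simp, by rw [hHpi]; simp, ?_⟩
  intro x hx
  rcases hx with h | h
  · exact key x 0 hH0 (by simpa using h)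
  · exact key x ((T:ℝ) * Real.pi) hHpi h
end
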